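/- arXiv:1705.07978 — 8 statements merged into one kernel-verified Lean document; each statement's English description precedes it below -/
import Mathlib

section
/- Let α₀ < α₁ be real numbers and M > 0. Let (f_n)_{n≥0} be a sequence of differentiable, nondecreasing functions f_n : [α₀, α₁] → [0, M] that converges pointwise to a function f, with f_0(x) > 0 for all x ∈ [α₀, α₁]. Set Σ_n := Σ_{k=0}^{n-1} f_k, and assume f_n'(x) ≥ (n / Σ_n(x)) · f_n(x) for all n ≥ 1 and all x ∈ [α₀, α₁]. Then there exists β₁ ∈ [α₀, α₁] such that: (i) for every β < β₁ (with β ∈ [α₀, α₁]) there exists c_β > 0 such that f_n(β) ≤ M·exp(−c_β·n) for all sufficiently large n; (ii) for every β > β₁ (with β ∈ [α₀, α₁]), f(β) ≥ β − β₁. -/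
open Filter Real

set_option maxHeartbeats 2000000 in
/-- Lemma 1.2 (technical lemma): given differentiable nondecreasing functions
`f n : [α₀, α₁] → [0, M]` converging pointwise to `F`, with `f 0 > 0` and
satisfying `f_n' ≥ (n / Σ_n) f_n`, there exists `β₁ ∈ [α₀, α₁]` such that
below `β₁` the `f n` decay exponentially and above `β₁` we have `F β ≥ β - β₁`. -/
theorem stmt_0 (α₀ α₁ M : ℝ) (hα : α₀ < α₁) (hM : 0 < M)
    (f f' : ℕ → ℝ → ℝ) (F : ℝ → ℝ)
    (hderiv : ∀ n, ∀ x ∈ Set.Icc α₀ α₁,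
      HasDerivWithinAt (f n) (f' n x) (Set.Icc α₀ α₁) x)
    (hmono : ∀ n, MonotoneOn (f n) (Set.Icc α₀ α₁))
    (hrange : ∀ n, ∀ x ∈ Set.Icc α₀ α₁, f n x ∈ Set.Icc 0 M)
    (hconv : ∀ x ∈ Set.Icc α₀ α₁,
      Tendsto (fun n => f n x) atTop (nhds (F x)))
    (hf0 : ∀ x ∈ Set.Icc α₀ α₁, 0 < f 0 x)
    (hineq : ∀ n, 1 ≤ n → ∀ x ∈ Set.Icc α₀ α₁,
      f' n x ≥ ((n : ℝ) / (∑ k ∈ Finset.range n, f k x)) * f n x) :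
    ∃ β₁ ∈ Set.Icc α₀ α₁,
      (∀ β ∈ Set.Icc α₀ α₁, β < β₁ →
        ∃ c > 0, ∀ᶠ n : ℕ in atTop, f n β ≤ M * Real.exp (-c * n)) ∧
      (∀ β ∈ Set.Icc α₀ α₁, β₁ < β → F β ≥ β - β₁) := by
  have hIsub : ∀ {x y : ℝ}, x ∈ Set.Icc α₀ α₁ → y ∈ Set.Icc α₀ α₁ →
      Set.Icc x y ⊆ Set.Icc α₀ α₁ := fun hx hy => Set.Icc_subset_Icc hx.1 hy.2
  set S : ℕ → ℝ → ℝ := fun n x => ∑ k ∈ Finset.range n, f k x with hSdef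
  have hf_nonneg : ∀ n, ∀ x ∈ Set.Icc α₀ α₁, 0 ≤ f n x := fun n x hx => (hrange n x hx).1
  have hf_le : ∀ n, ∀ x ∈ Set.Icc α₀ α₁, f n x ≤ M := fun n x hx => (hrange n x hx).2
  have hS_mono_x : ∀ n, ∀ x ∈ Set.Icc α₀ α₁, ∀ y ∈ Set.Icc α₀ α₁, x ≤ y → S n x ≤ S n y := by
    intro n x hx y hy hxy
    exact Finset.sum_le_sum fun k _ => hmono k hx hy hxy
  have hS1 : ∀ x, S 1 x = f 0 x := by
    intro x; simp [hSdef]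
  have hS_pos : ∀ n, 1 ≤ n → ∀ x ∈ Set.Icc α₀ α₁, 0 < S n x := by
    intro n hn x hx
    have h1 : S 1 x ≤ S n x := by
      apply Finset.sum_le_sum_of_subset_of_nonneg (Finset.range_subset_range.mpr hn)
      intro k _ _; exact hf_nonneg k x hx
    rw [hS1] at h1
    exact lt_of_lt_of_le (hf0 x hx) h1
  -- monotonicity helper from derivative nonnegativity
  have key_mono : ∀ (a b : ℝ), a ≤ b → ∀ (g g' : ℝ → ℝ),
      (∀ t ∈ Set.Icc a b, HasDerivWithinAt g (g' t) (Set.Icc a b) t) →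
      (∀ t ∈ Set.Icc a b, 0 ≤ g' t) → g a ≤ g b := by
    intro a b hab g g' hg hg'
    have hcont : ContinuousOn g (Set.Icc a b) := fun t ht => (hg t ht).continuousWithinAt
    have hmem : ∀ t ∈ Set.Ioo a b, HasDerivAt g (g' t) t := fun t ht =>
      (hg t (Set.Ioo_subset_Icc_self ht)).hasDerivAt (Icc_mem_nhds ht.1 ht.2)
    have hmono' := monotoneOn_of_deriv_nonneg (convex_Icc a b) hcont
      (fun t ht => by
        rw [interior_Icc] at ht
        exact (hmem t ht).differentiableAt.differentiableWithinAt)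
      (fun t ht => by
        rw [interior_Icc] at ht
        rw [(hmem t ht).deriv]
        exact hg' t (Set.Ioo_subset_Icc_self ht))
    exact hmono' (Set.left_mem_Icc.2 hab) (Set.right_mem_Icc.2 hab) hab
  -- Key inequality A : f n x ≤ f n y * exp (- n (y-x) / S n y)
  have keyA : ∀ n, 1 ≤ n → ∀ x ∈ Set.Icc α₀ α₁, ∀ y ∈ Set.Icc α₀ α₁, x ≤ y →
      f n x ≤ f n y * Real.exp (-((n : ℝ) * (y - x) / S n y)) := by
    intro n hn x hx y hy hxy
    have hIcc := hIsub hx hy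
    have hSvpos : 0 < S n y := hS_pos n hn y hy
    set E : ℝ → ℝ := fun t => Real.exp (-((n:ℝ) * t / S n y)) with hE
    have hEderiv : ∀ t : ℝ, HasDerivAt E (E t * (-((n:ℝ) / S n y))) t := by
      intro t
      have h1 : HasDerivAt (fun t : ℝ => -((n:ℝ) * t / S n y)) (-((n:ℝ) / S n y)) t := by
        have h0 := (((hasDerivAt_id' t).const_mul (n:ℝ)).div_const (S n y)).neg
        simp only [mul_one] at h0
        exact h0
      simpa [hE] using h1.exp
    have hg : ∀ t ∈ Set.Icc x y, HasDerivWithinAt (fun t => f n t * E t)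
        (f' n t * E t + f n t * (E t * (-((n:ℝ) / S n y)))) (Set.Icc x y) t := by
      intro t ht
      exact ((hderiv n t (hIcc ht)).mono hIcc).mul ((hEderiv t).hasDerivWithinAt)
    have hg' : ∀ t ∈ Set.Icc x y, 0 ≤ f' n t * E t + f n t * (E t * (-((n:ℝ) / S n y))) := by
      intro t ht
      have htI := hIcc ht
      have h1 : ((n:ℝ) / S n t) * f n t ≤ f' n t := hineq n hn t htI
      have hStpos : 0 < S n t := hS_pos n hn t htI
      have hSty : S n t ≤ S n y := hS_mono_x n t htI y hy ht.2
      have h2 : (n:ℝ) / S n y ≤ (n:ℝ) / S n t := by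
        apply div_le_div_of_nonneg_left (by positivity) hStpos hSty
      have h3 : ((n:ℝ) / S n y) * f n t ≤ f' n t :=
        le_trans (mul_le_mul_of_nonneg_right h2 (hf_nonneg n t htI)) h1
      have hEpos : 0 < E t := Real.exp_pos _
      nlinarith [mul_le_mul_of_nonneg_right h3 hEpos.le]
    have h := key_mono x y hxy _ _ hg hg'
    have hExpos : 0 < E x := Real.exp_pos _
    have hEy : E y = E x * Real.exp (-((n : ℝ) * (y - x) / S n y)) := by
      rw [hE]; simp only []
      rw [← Real.exp_add]; congr 1; field_simp; ring
    rw [hEy] at h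
    have h2 : f n x * E x ≤ f n y * Real.exp (-((n : ℝ) * (y - x) / S n y)) * E x := by
      calc f n x * E x ≤ f n y * (E x * Real.exp (-((n : ℝ) * (y - x) / S n y))) := h
        _ = f n y * Real.exp (-((n : ℝ) * (y - x) / S n y)) * E x := by ring
    exact le_of_mul_le_mul_right h2 hExpos
  -- Key inequality B
  have keyB : ∀ N, 1 ≤ N → ∀ x ∈ Set.Icc α₀ α₁, ∀ y ∈ Set.Icc α₀ α₁, x ≤ y →
      (y - x) * Real.log (S N x / M) ≤
        ∑ k ∈ Finset.range N, (f (k+1) y - f (k+1) x) / ((k:ℝ)+1) := by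
    intro N hN x hx y hy hxy
    have hIcc := hIsub hx hy
    set L := Real.log (S N x / M) with hL
    have hlow : ∀ t ∈ Set.Icc x y, L ≤ ∑ k ∈ Finset.range N, f' (k+1) t / ((k:ℝ)+1) := by
      intro t ht
      have htI := hIcc ht
      have step2 : ∀ k ∈ Finset.range N,
          Real.log (S (k+2) t) - Real.log (S (k+1) t) ≤ f (k+1) t / S (k+1) t := by
        intro k _
        have h1 : 0 < S (k+1) t := hS_pos (k+1) (by omega) t htI
        have h2 : S (k+2) t = S (k+1) t + f (k+1) t := Finset.sum_range_succ _ _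
        have h3 : 0 < S (k+2) t := by
          rw [h2]; have := hf_nonneg (k+1) t htI; linarith
        rw [← Real.log_div h3.ne' h1.ne']
        calc Real.log (S (k+2) t / S (k+1) t) ≤ S (k+2) t / S (k+1) t - 1 :=
              Real.log_le_sub_one_of_pos (div_pos h3 h1)
          _ = f (k+1) t / S (k+1) t := by rw [h2]; field_simp; ring
      have step1 : ∀ k ∈ Finset.range N,
          f (k+1) t / S (k+1) t ≤ f' (k+1) t / ((k:ℝ)+1) := by
        intro k _
        have h4 := hineq (k+1) (by omega) t htI
        have h1 : 0 < S (k+1) t := hS_pos (k+1) (by omega) t htI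
        have hcast : ((k+1:ℕ):ℝ) = (k:ℝ)+1 := by push_cast; ring
        have h5 : f (k+1) t / S (k+1) t
            = (((k:ℝ)+1) / S (k+1) t * f (k+1) t) / ((k:ℝ)+1) := by
          field_simp
        rw [h5]
        have h6 : ((k:ℝ)+1) / S (k+1) t * f (k+1) t ≤ f' (k+1) t := by
          rw [← hcast]; exact h4
        apply div_le_div_of_nonneg_right h6 (by positivity)
      have htel : ∑ k ∈ Finset.range N,
          (Real.log (S (k+1+1) t) - Real.log (S (k+1) t))
          = Real.log (S (N+1) t) - Real.log (S 1 t) :=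
        Finset.sum_range_sub (fun k => Real.log (S (k+1) t)) N
      have hSN1 : Real.log (S N x) ≤ Real.log (S (N+1) t) := by
        apply Real.log_le_log (hS_pos N hN x hx)
        calc S N x ≤ S N t := hS_mono_x N x hx t htI ht.1
          _ ≤ S (N+1) t := by
            apply Finset.sum_le_sum_of_subset_of_nonneg (Finset.range_subset_range.mpr (by omega))
            intro k _ _; exact hf_nonneg k t htI
      have hS1M : Real.log (S 1 t) ≤ Real.log M := by
        apply Real.log_le_log (by rw [hS1]; exact hf0 t htI)
        rw [hS1]; exact hf_le 0 t htI
      have hLsplit : L = Real.log (S N x) - Real.log M :=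
        Real.log_div (hS_pos N hN x hx).ne' hM.ne'
      calc L ≤ Real.log (S (N+1) t) - Real.log (S 1 t) := by rw [hLsplit]; linarith
        _ = ∑ k ∈ Finset.range N, (Real.log (S (k+1+1) t) - Real.log (S (k+1) t)) := htel.symm
        _ ≤ ∑ k ∈ Finset.range N, f (k+1) t / S (k+1) t := Finset.sum_le_sum step2
        _ ≤ ∑ k ∈ Finset.range N, f' (k+1) t / ((k:ℝ)+1) := Finset.sum_le_sum step1
    have hg : ∀ t ∈ Set.Icc x y, HasDerivWithinAt
        (fun u => (∑ k ∈ Finset.range N, f (k+1) u / ((k:ℝ)+1)) - u * L)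
        ((∑ k ∈ Finset.range N, f' (k+1) t / ((k:ℝ)+1)) - L) (Set.Icc x y) t := by
      intro t ht
      have hsum : HasDerivWithinAt (fun u => ∑ k ∈ Finset.range N, f (k+1) u / ((k:ℝ)+1))
          (∑ k ∈ Finset.range N, f' (k+1) t / ((k:ℝ)+1)) (Set.Icc x y) t := by
        apply HasDerivWithinAt.fun_sum
        intro k _
        exact ((hderiv (k+1) t (hIcc ht)).mono hIcc).div_const _
      have hid : HasDerivWithinAt (fun u : ℝ => u * L) L (Set.Icc x y) t := by
        simpa using (hasDerivWithinAt_id t (Set.Icc x y)).mul_const L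
      exact hsum.sub hid
    have h := key_mono x y hxy _ _ hg (fun t ht => sub_nonneg.2 (hlow t ht))
    have hsplit : ∑ k ∈ Finset.range N, (f (k+1) y - f (k+1) x) / ((k:ℝ)+1)
        = (∑ k ∈ Finset.range N, f (k+1) y / ((k:ℝ)+1))
          - ∑ k ∈ Finset.range N, f (k+1) x / ((k:ℝ)+1) := by
      rw [← Finset.sum_sub_distrib]
      exact Finset.sum_congr rfl fun k _ => (sub_div _ _ _)
    have hyx : (y - x) * L = y * L - x * L := by ring
    rw [hsplit, hyx]
    linarith
  -- harmonic-type sum bound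
  have hsumbound : ∀ (g : ℕ → ℝ) (ε : ℝ) (n₁ : ℕ), (∀ n, 0 ≤ g n) → (∀ n, g n ≤ M) →
      (∀ n, n₁ ≤ n → g n ≤ ε) → 0 ≤ ε → ∀ N : ℕ,
      ∑ k ∈ Finset.range N, g (k+1) / ((k:ℝ)+1) ≤ n₁ * M + ε * (1 + Real.log N) := by
    intro g ε n₁ hg0 hgM hgε hε N
    have hterm : ∀ k ∈ Finset.range N, g (k+1)/((k:ℝ)+1) ≤
        (if k < n₁ then M else 0) + ε * (1/((k:ℝ)+1)) := by
      intro k _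
      by_cases hk : k < n₁
      · simp only [hk, if_true]
        have h1 : g (k+1)/((k:ℝ)+1) ≤ M := by
          rw [div_le_iff₀ (by positivity)]
          nlinarith [hgM (k+1), hg0 (k+1), Nat.cast_nonneg (α := ℝ) k, hM]
        have h2 : 0 ≤ ε * (1/((k:ℝ)+1)) := by positivity
        linarith
      · simp only [hk, if_false, zero_add]
        rw [mul_one_div]
        apply div_le_div_of_nonneg_right (hgε (k+1) (by omega)) (by positivity)
    have hharm : ∑ k ∈ Finset.range N, 1/((k:ℝ)+1) ≤ 1 + Real.log N := by
      have h1 := harmonic_le_one_add_log N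
      have hcast : (harmonic N : ℝ) = ∑ k ∈ Finset.range N, 1/((k:ℝ)+1) := by
        rw [harmonic]
        push_cast
        simp [one_div]
      linarith [hcast ▸ h1]
    have hite : (∑ k ∈ Finset.range N, if k < n₁ then M else 0) ≤ n₁ * M := by
      classical
      rw [← Finset.sum_filter]
      calc ∑ k ∈ (Finset.range N).filter (· < n₁), M
          ≤ ∑ k ∈ Finset.range n₁, M := by
            apply Finset.sum_le_sum_of_subset_of_nonneg
            · intro k hk
              simp only [Finset.mem_filter, Finset.mem_range] at hk ⊢
              exact hk.2
            · intros; exact hM.le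
        _ = n₁ * M := by simp [Finset.sum_const, mul_comm]
    calc ∑ k ∈ Finset.range N, g (k+1) / ((k:ℝ)+1)
        ≤ ∑ k ∈ Finset.range N, ((if k < n₁ then M else 0) + ε * (1/((k:ℝ)+1))) :=
          Finset.sum_le_sum hterm
      _ = (∑ k ∈ Finset.range N, if k < n₁ then M else 0)
          + ε * ∑ k ∈ Finset.range N, 1/((k:ℝ)+1) := by
          rw [Finset.sum_add_distrib, Finset.mul_sum]
      _ ≤ n₁ * M + ε * (1 + Real.log N) := by
          have := mul_le_mul_of_nonneg_left hharm hε
          linarith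
  have hlogN : Tendsto (fun N : ℕ => Real.log N) atTop atTop :=
    Real.tendsto_log_atTop.comp tendsto_natCast_atTop_atTop
  -- F basic facts
  have hF_mono : ∀ x ∈ Set.Icc α₀ α₁, ∀ y ∈ Set.Icc α₀ α₁, x ≤ y → F x ≤ F y := by
    intro x hx y hy hxy
    exact le_of_tendsto_of_tendsto (hconv x hx) (hconv y hy)
      (Filter.Eventually.of_forall fun n => hmono n hx hy hxy)
  have hF_nonneg : ∀ x ∈ Set.Icc α₀ α₁, 0 ≤ F x := fun x hx =>
    ge_of_tendsto (hconv x hx) (Filter.Eventually.of_forall fun n => hf_nonneg n x hx)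
  -- definition of β₁
  set Z : Set ℝ := insert α₀ {x | x ∈ Set.Icc α₀ α₁ ∧ F x = 0} with hZ
  have hZne : Z.Nonempty := ⟨α₀, Set.mem_insert _ _⟩
  have hZub : ∀ w ∈ Z, w ≤ α₁ := by
    intro w hw
    rcases Set.mem_insert_iff.mp hw with rfl | hw'
    · exact hα.le
    · exact hw'.1.2
  have hZbdd : BddAbove Z := ⟨α₁, hZub⟩
  set β₁ := sSup Z with hβ₁
  have hβ₁I : β₁ ∈ Set.Icc α₀ α₁ :=
    ⟨le_csSup hZbdd (Set.mem_insert _ _), csSup_le hZne hZub⟩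
  refine ⟨β₁, hβ₁I, ?_, ?_⟩
  · -- Part (i): exponential decay below β₁
    intro β hβ hlt
    obtain ⟨z, hzZ, hβz⟩ := exists_lt_of_lt_csSup hZne hlt
    have hz : z ∈ Set.Icc α₀ α₁ ∧ F z = 0 := by
      rcases Set.mem_insert_iff.mp hzZ with rfl | h
      · exact absurd hβz (not_lt.mpr hβ.1)
      · exact h
    obtain ⟨hzI, hzF⟩ := hz
    set d := (z - β)/3 with hd
    have hdpos : 0 < d := by rw [hd]; linarith
    set t₁ := β + d with ht₁def
    set t₂ := β + 2*d with ht₂def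
    have ht₁I : t₁ ∈ Set.Icc α₀ α₁ := ⟨by linarith [hβ.1], by linarith [hzI.2]⟩
    have ht₂I : t₂ ∈ Set.Icc α₀ α₁ := ⟨by linarith [hβ.1], by linarith [hzI.2]⟩
    have ht₂z : t₂ ≤ z := by rw [ht₂def, hd]; linarith
    have hzt₂ : z - t₂ = d := by rw [ht₂def, hd]; ring
    have ht21 : t₂ - t₁ = d := by rw [ht₂def, ht₁def]; ring
    have ht1β : t₁ - β = d := by rw [ht₁def]; ring
    -- f n z → 0
    have hfz0 : Tendsto (fun n => f n z) atTop (nhds 0) := by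
      have := hconv z hzI; rwa [hzF] at this
    obtain ⟨n₁, hn₁⟩ := Filter.eventually_atTop.mp
      (hfz0.eventually_lt_const (show (0:ℝ) < d/8 by positivity))
    -- Step A : eventually S N t₂ ≤ √N
    have hA : ∀ᶠ N : ℕ in atTop, S N t₂ ≤ Real.sqrt N := by
      have hc : (0:ℝ) < d * (1/2) - d/8 := by linarith
      have hev1 : ∀ᶠ N : ℕ in atTop,
          (n₁ : ℝ) * M + (d/8) * (1 + Real.log N) < d * ((1/2) * Real.log N - Real.log M) := by
        filter_upwards [hlogN.eventually_ge_atTop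
          (((n₁:ℝ)*M + d/8 + d*Real.log M + 1) / (d * (1/2) - d/8))] with N hN
        rw [div_le_iff₀ hc] at hN
        nlinarith
      filter_upwards [hev1, eventually_ge_atTop 1] with N hN hN1
      by_contra hcon
      push_neg at hcon
      have hkb := keyB N hN1 t₂ ht₂I z hzI ht₂z
      have h2 : ∑ k ∈ Finset.range N, (f (k+1) z - f (k+1) t₂)/((k:ℝ)+1)
          ≤ ∑ k ∈ Finset.range N, f (k+1) z/((k:ℝ)+1) := by
        apply Finset.sum_le_sum
        intro k _
        apply div_le_div_of_nonneg_right _ (by positivity)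
        linarith [hf_nonneg (k+1) t₂ ht₂I]
      have h3 := hsumbound (fun n => f n z) (d/8) n₁ (fun n => hf_nonneg n z hzI)
        (fun n => hf_le n z hzI) (fun n hn => (hn₁ n hn).le) (by positivity) N
      have hSpos : 0 < S N t₂ := hS_pos N hN1 t₂ ht₂I
      have hNpos : (0:ℝ) < N := by exact_mod_cast hN1
      have hsqpos : 0 < Real.sqrt N := Real.sqrt_pos.mpr hNpos
      have h4 : (1/2) * Real.log N - Real.log M ≤ Real.log (S N t₂ / M) := by
        rw [Real.log_div hSpos.ne' hM.ne']
        have h5 : Real.log (Real.sqrt N) ≤ Real.log (S N t₂) :=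
          Real.log_le_log hsqpos hcon.le
        rw [Real.log_sqrt (Nat.cast_nonneg N)] at h5
        linarith
      have h6 : d * ((1/2) * Real.log N - Real.log M) ≤ (z - t₂) * Real.log (S N t₂ / M) := by
        rw [hzt₂]
        exact mul_le_mul_of_nonneg_left h4 hdpos.le
      linarith
    obtain ⟨N₀, hN₀⟩ := Filter.eventually_atTop.mp hA
    set N₁ := max N₀ 1 with hN₁def
    -- decay bound at t₁
    have hdecay : ∀ n, N₁ ≤ n → f n t₁ ≤ M * (24 / (d^4 * (n:ℝ)^2)) := by
      intro n hn
      have hn1 : 1 ≤ n := le_trans (le_max_right _ _) hn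
      have hSle : S n t₂ ≤ Real.sqrt n := hN₀ n (le_trans (le_max_left _ _) hn)
      have hnpos : (0:ℝ) < n := by exact_mod_cast hn1
      have hsq : 0 < Real.sqrt n := Real.sqrt_pos.mpr hnpos
      have hSpos : 0 < S n t₂ := hS_pos n hn1 t₂ ht₂I
      have h1 := keyA n hn1 t₁ ht₁I t₂ ht₂I (by rw [ht₁def, ht₂def]; linarith)
      have hdiv : (n:ℝ) / Real.sqrt n ≤ (n:ℝ) / S n t₂ :=
        div_le_div_of_nonneg_left (by positivity) hSpos hSle
      rw [Real.div_sqrt] at hdiv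
      have hexp : d * Real.sqrt n ≤ (n:ℝ) * (t₂ - t₁) / S n t₂ := by
        rw [ht21, mul_comm (n:ℝ) d, mul_div_assoc]
        exact mul_le_mul_of_nonneg_left hdiv hdpos.le
      have hexp2 : Real.exp (-((n:ℝ) * (t₂ - t₁) / S n t₂)) ≤ Real.exp (-(d * Real.sqrt n)) :=
        Real.exp_le_exp.mpr (by linarith)
      have hx4 : (d * Real.sqrt n)^4 = d^4 * (n:ℝ)^2 := by
        rw [mul_pow]
        congr 1
        rw [show (Real.sqrt n)^4 = ((Real.sqrt n)^2)^2 by ring, Real.sq_sqrt hnpos.le]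
      have h5 : (d * Real.sqrt n)^4 / 24 ≤ Real.exp (d * Real.sqrt n) := by
        have hs := Real.sum_le_exp_of_nonneg (x := d * Real.sqrt n) (by positivity) 5
        have hsingle : (d * Real.sqrt n)^4 / (Nat.factorial 4 : ℝ)
            ≤ ∑ i ∈ Finset.range 5, (d * Real.sqrt n)^i / (Nat.factorial i : ℝ) := by
          apply Finset.single_le_sum (f := fun i => (d * Real.sqrt n)^i / (Nat.factorial i : ℝ))
            (fun i _ => by positivity) (by norm_num)
        have h24 : (Nat.factorial 4 : ℝ) = 24 := by norm_num [Nat.factorial]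
        rw [h24] at hsingle
        calc (d * Real.sqrt n)^4 / 24
            ≤ ∑ i ∈ Finset.range 5, (d * Real.sqrt n)^i / (Nat.factorial i : ℝ) := hsingle
          _ ≤ Real.exp (d * Real.sqrt n) := hs
      have hpoly : Real.exp (-(d * Real.sqrt n)) ≤ 24 / (d^4 * (n:ℝ)^2) := by
        rw [Real.exp_neg]
        have h6 : d^4 * (n:ℝ)^2 / 24 ≤ Real.exp (d * Real.sqrt n) := hx4 ▸ h5
        have h7 : 0 < d^4 * (n:ℝ)^2 / 24 := by positivity
        calc (Real.exp (d * Real.sqrt n))⁻¹ ≤ (d^4 * (n:ℝ)^2 / 24)⁻¹ := by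
              apply inv_anti₀ h7 h6
          _ = 24 / (d^4 * (n:ℝ)^2) := by rw [inv_div]
      calc f n t₁ ≤ f n t₂ * Real.exp (-((n:ℝ) * (t₂ - t₁) / S n t₂)) := h1
        _ ≤ M * (24 / (d^4 * (n:ℝ)^2)) := by
            apply mul_le_mul (hf_le n t₂ ht₂I) (le_trans hexp2 hpoly)
              (Real.exp_nonneg _) hM.le
    -- summability at t₁
    have hsummable : Summable (fun n => f n t₁) := by
      rw [← summable_nat_add_iff N₁]
      have hbase : Summable (fun n : ℕ => 1 / ((n:ℝ)+1)^2) := by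
        have h0 : Summable (fun n : ℕ => 1 / ((n:ℕ):ℝ)^2) :=
          summable_one_div_nat_pow.mpr (by norm_num)
        have h2 := (summable_nat_add_iff 1).mpr h0
        simpa using h2
      have hN₁1 : 1 ≤ N₁ := le_max_right _ _
      apply Summable.of_nonneg_of_le (f := fun n : ℕ => (M * 24 / d^4) * (1 / ((n:ℝ)+1)^2))
        (fun n => hf_nonneg _ t₁ ht₁I) ?_ (hbase.mul_left _)
      intro n
      have hle : ((n:ℝ)+1) ≤ ((n + N₁ : ℕ) : ℝ) := by
        push_cast
        have h1 : (1:ℝ) ≤ (N₁:ℝ) := by exact_mod_cast hN₁1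
        linarith
      have hp : (0:ℝ) < (n:ℝ)+1 := by positivity
      have hq : (0:ℝ) < ((n + N₁ : ℕ) : ℝ) := lt_of_lt_of_le hp hle
      have h2 : 1/(((n + N₁ : ℕ):ℝ))^2 ≤ 1/((n:ℝ)+1)^2 := by
        apply one_div_le_one_div_of_le (by positivity)
        nlinarith
      calc f (n + N₁) t₁ ≤ M * (24 / (d^4 * ((n + N₁ : ℕ):ℝ)^2)) :=
            hdecay _ (Nat.le_add_left _ _)
        _ = (M * 24 / d^4) * (1 / (((n + N₁ : ℕ):ℝ))^2) := by
            field_simp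
        _ ≤ (M * 24 / d^4) * (1 / ((n:ℝ)+1)^2) :=
            mul_le_mul_of_nonneg_left h2 (by positivity)
    set K := ∑' n, f n t₁ with hKdef
    have hKpos : 0 < K := by
      have h1 : f 0 t₁ ≤ K := Summable.le_tsum hsummable 0 (fun j _ => hf_nonneg j t₁ ht₁I)
      linarith [hf0 t₁ ht₁I]
    have hKbound : ∀ n, S n t₁ ≤ K := fun n =>
      Summable.sum_le_tsum (Finset.range n) (fun j _ => hf_nonneg j t₁ ht₁I) hsummable
    refine ⟨d / K, div_pos hdpos hKpos, ?_⟩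
    filter_upwards [eventually_ge_atTop 1] with n hn1
    have h1 := keyA n hn1 β hβ t₁ ht₁I (by rw [ht₁def]; linarith)
    have hSpos : 0 < S n t₁ := hS_pos n hn1 t₁ ht₁I
    have hexp : (d / K) * n ≤ (n:ℝ) * (t₁ - β) / S n t₁ := by
      rw [ht1β]
      have h2 : (n:ℝ) * d / K ≤ (n:ℝ) * d / S n t₁ :=
        div_le_div_of_nonneg_left (by positivity) hSpos (hKbound n)
      calc (d / K) * n = (n:ℝ) * d / K := by ring
        _ ≤ (n:ℝ) * d / S n t₁ := h2
    calc f n β ≤ f n t₁ * Real.exp (-((n:ℝ) * (t₁ - β) / S n t₁)) := h1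
      _ ≤ M * Real.exp (-(d/K) * n) := by
          apply mul_le_mul (hf_le n t₁ ht₁I) _ (Real.exp_nonneg _) hM.le
          apply Real.exp_le_exp.mpr
          rw [neg_mul]
          linarith
  · -- Part (ii): linear lower bound above β₁
    intro β hβ hlt
    have claim : ∀ t, β₁ < t → t < β → β - t ≤ F β := by
      intro t ht1 ht2
      have htI : t ∈ Set.Icc α₀ α₁ := ⟨le_trans hβ₁I.1 ht1.le, le_trans ht2.le hβ.2⟩
      have hFt_pos : 0 < F t := by
        rcases (hF_nonneg t htI).lt_or_eq with h | h
        · exact h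
        · exact absurd (le_csSup hZbdd (Set.mem_insert_of_mem _ ⟨htI, h.symm⟩))
            (not_le.mpr ht1)
      by_contra hcon
      push_neg at hcon
      have hd0 : 0 ≤ F β - F t := sub_nonneg.2 (hF_mono t htI β hβ ht2.le)
      set ε := (β - t - (F β - F t))/4 with hε
      have hFtβ : F t ≤ F β := hF_mono t htI β hβ ht2.le
      have hεpos : 0 < ε := by
        rw [hε]
        have : F β - F t ≤ F β := by linarith [hF_nonneg t htI]
        linarith
      obtain ⟨n₂, hn₂⟩ := Filter.eventually_atTop.mp
        (((hconv β hβ).sub (hconv t htI)).eventually_lt_const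
          (show F β - F t < F β - F t + ε by linarith))
      have hces : Tendsto (fun N : ℕ => (N:ℝ)⁻¹ * ∑ i ∈ Finset.range N, f i t)
          atTop (nhds (F t)) := by
        have := (hconv t htI).cesaro
        simpa [smul_eq_mul] using this
      have hev2 : ∀ᶠ N : ℕ in atTop, (F t / 2) * N ≤ S N t := by
        filter_upwards [hces.eventually_const_lt (show F t / 2 < F t by linarith),
          eventually_ge_atTop 1] with N h hN1
        have hNpos : (0:ℝ) < N := by exact_mod_cast hN1
        have := h.le
        calc (F t / 2) * N ≤ ((N:ℝ)⁻¹ * S N t) * N := by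
              apply mul_le_mul_of_nonneg_right this hNpos.le
          _ = S N t := by field_simp
      have hev3 : ∀ᶠ N : ℕ in atTop,
          (n₂:ℝ)*M + ((F β - F t) + ε)*(1 + Real.log N)
            < (β - t) * (Real.log N + Real.log (F t/(2*M))) := by
        have hgap : (0:ℝ) < (β - t) - ((F β - F t) + ε) := by rw [hε]; linarith
        filter_upwards [hlogN.eventually_ge_atTop
          ((((n₂:ℝ)*M + ((F β - F t) + ε) + 1) - (β - t) * Real.log (F t/(2*M)))
            / ((β - t) - ((F β - F t) + ε)))] with N hN
        rw [div_le_iff₀ hgap] at hN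
        nlinarith
      obtain ⟨N, hNall⟩ := ((hev2.and hev3).and (eventually_ge_atTop 1)).exists
      obtain ⟨⟨hN2, hN3⟩, hN1⟩ := hNall
      have hkb := keyB N hN1 t htI β hβ ht2.le
      have hSpos : 0 < S N t := hS_pos N hN1 t htI
      have hNpos : (0:ℝ) < N := by exact_mod_cast hN1
      have hlog : Real.log N + Real.log (F t/(2*M)) ≤ Real.log (S N t / M) := by
        have h1 : (F t/(2*M)) * N ≤ S N t / M := by
          have h1a : ((F t/2) * N)/M ≤ (S N t)/M := div_le_div_of_nonneg_right hN2 hM.le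
          have h1b : (F t/(2*M)) * N = ((F t/2)*N)/M := by
            rw [eq_div_iff hM.ne']; field_simp
          rw [h1b]; exact h1a
        have h2 : Real.log ((F t/(2*M)) * N) ≤ Real.log (S N t / M) :=
          Real.log_le_log (by positivity) h1
        rw [Real.log_mul (by positivity) hNpos.ne'] at h2
        linarith
      have hsb := hsumbound (fun n => f n β - f n t) ((F β - F t) + ε) n₂
        (fun n => sub_nonneg.2 (hmono n htI hβ ht2.le))
        (fun n => by show f n β - f n t ≤ M; linarith [hf_le n β hβ, hf_nonneg n t htI])
        (fun n hn => (hn₂ n hn).le) (by linarith) N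
      have hfinal : (β - t) * (Real.log N + Real.log (F t/(2*M)))
          ≤ (n₂:ℝ)*M + ((F β - F t)+ε)*(1+Real.log N) := by
        calc (β - t) * (Real.log N + Real.log (F t/(2*M)))
            ≤ (β - t) * Real.log (S N t / M) :=
              mul_le_mul_of_nonneg_left hlog (by linarith)
          _ ≤ ∑ k ∈ Finset.range N, (f (k+1) β - f (k+1) t) / ((k:ℝ)+1) := hkb
          _ ≤ (n₂:ℝ)*M + ((F β - F t)+ε)*(1+Real.log N) := hsb
      linarith
    by_contra hcon
    rw [ge_iff_le, not_le] at hcon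
    have hFβ0 : 0 ≤ F β := hF_nonneg β hβ
    set t := β₁ + (β - β₁ - F β)/2 with htdef
    have h1 : β₁ < t := by rw [htdef]; linarith
    have h2 : t < β := by rw [htdef]; linarith
    have h3 := claim t h1 h2
    rw [htdef] at h3
    linarith
end

section
/- Let α₀ < α₁ be real numbers and M > 0. Let (f_n)_{n≥0} be a sequence of differentiable, nondecreasing functions f_n : [α₀, α₁] → [0, M] with f_0(x) > 0 for all x, and set Σ_n := Σ_{k=0}^{n-1} f_k. Assume f_n'(x) ≥ (n / Σ_n(x)) · f_n(x) for all n ≥ 1 and x ∈ [α₀, α₁]. Suppose that for some β ∈ (α₀, α₁] there exist α > 0 and an integer N ≥ 1 such that Σ_n(β) ≤ n^{1−α} for all n ≥ N. Then for every β'' ∈ [α₀, β) there exists c > 0 such that f_n(β'') ≤ M·exp(−c·n) for all sufficiently large n. -/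
open Filter Real

/-- Gronwall-type lower bound: if `g' ≥ r g` on `[a,b]` then `g a ≤ g b * exp(-(r(b-a)))`. -/
lemma aux_gron {a b r : ℝ} (hab : a ≤ b) {g g' : ℝ → ℝ}
    (hd : ∀ x ∈ Set.Icc a b, HasDerivWithinAt g (g' x) (Set.Icc a b) x)
    (hr : ∀ x ∈ Set.Icc a b, r * g x ≤ g' x) :
    g a ≤ g b * Real.exp (-(r * (b - a))) := by
  set G : ℝ → ℝ := fun x => g x * Real.exp (-(r * x)) with hG
  have hd' : ∀ x ∈ Set.Icc a b, HasDerivWithinAt G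
      (g' x * Real.exp (-(r * x)) + g x * (Real.exp (-(r * x)) * (-r))) (Set.Icc a b) x := by
    intro x hx
    have he : HasDerivAt (fun x : ℝ => Real.exp (-(r * x))) (Real.exp (-(r * x)) * (-r)) x := by
      have h1 : HasDerivAt (fun x : ℝ => -(r * x)) (-r) x := ((hasDerivAt_id x).const_mul r).neg.congr_deriv (by ring)
      exact h1.exp
    exact (hd x hx).mul he.hasDerivWithinAt
  have hmono : MonotoneOn G (Set.Icc a b) := by
    apply monotoneOn_of_hasDerivWithinAt_nonneg (convex_Icc a b)
      (fun x hx => (hd' x hx).continuousWithinAt)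
      (f' := fun x => g' x * Real.exp (-(r * x)) + g x * (Real.exp (-(r * x)) * (-r)))
      (fun x hx => (hd' x (interior_subset hx)).mono interior_subset)
    intro x hx
    have hx' := interior_subset hx
    have h1 := hr x hx'
    have h2 : (0:ℝ) < Real.exp (-(r * x)) := Real.exp_pos _
    nlinarith [h2]
  have h := hmono (Set.left_mem_Icc.2 hab) (Set.right_mem_Icc.2 hab) hab
  have h2 : g a * Real.exp (-(r * a)) * Real.exp (r * a) ≤ g b * Real.exp (-(r * b)) * Real.exp (r * a) :=
    mul_le_mul_of_nonneg_right h (Real.exp_nonneg _)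
  calc g a = g a * Real.exp (-(r * a)) * Real.exp (r * a) := by
        rw [mul_assoc, ← Real.exp_add]; simp
    _ ≤ g b * Real.exp (-(r * b)) * Real.exp (r * a) := h2
    _ = g b * Real.exp (-(r * (b - a))) := by
        rw [mul_assoc, ← Real.exp_add]; ring_nf

/-- polynomial bound for stretched-exponential decay -/
lemma aux_poly {δ α : ℝ} (hδ : 0 < δ) (hα : 0 < α) :
    ∃ K > 0, ∀ k : ℕ, 1 ≤ k → Real.exp (-((k:ℝ) ^ α * δ)) ≤ K / ((k:ℝ) + 1) ^ 2 := by
  set m : ℕ := ⌈2 / α⌉₊ + 1 with hm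
  have hm1 : (1:ℝ) ≤ (m:ℝ) := by exact_mod_cast Nat.le_add_left 1 _
  have hm0 : (0:ℝ) < (m:ℝ) := by positivity
  have hm2 : (2:ℝ) ≤ α * m := by
    have h1 : 2 / α ≤ (m:ℝ) := by
      calc 2 / α ≤ (⌈2/α⌉₊ : ℝ) := Nat.le_ceil _
      _ ≤ (m:ℝ) := by rw [hm]; push_cast; linarith
    calc (2:ℝ) = α * (2 / α) := by field_simp
    _ ≤ α * m := by nlinarith
  refine ⟨4 * ((m:ℝ) / δ) ^ m, by positivity, ?_⟩
  intro k hk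
  have hk1 : (1:ℝ) ≤ (k:ℝ) := by exact_mod_cast hk
  have hkpos : (0:ℝ) < (k:ℝ) := by linarith
  have hkα : (0:ℝ) < (k:ℝ) ^ α := Real.rpow_pos_of_pos hkpos α
  set t : ℝ := (k:ℝ) ^ α * δ with ht
  have htpos : 0 < t := by positivity
  -- exp t ≥ (t/m)^m
  have e1 : Real.exp t = Real.exp (t / m) ^ m := by
    rw [← Real.exp_nat_mul]; congr 1; field_simp
  have e2 : (t / m) ^ m ≤ Real.exp (t / m) ^ m := by
    apply pow_le_pow_left₀ (by positivity)
    linarith [Real.add_one_le_exp (t / m)]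
  have e3 : (δ / m) ^ m * (k:ℝ) ^ (α * (m:ℝ)) ≤ (t / m) ^ m := by
    have : (t / m) ^ m = (δ / m) ^ m * ((k:ℝ) ^ α) ^ m := by
      rw [← mul_pow]; congr 1; field_simp; ring
    rw [this]
    have : ((k:ℝ) ^ α) ^ m = (k:ℝ) ^ (α * (m:ℝ)) := by
      rw [Real.rpow_mul (le_of_lt hkpos), Real.rpow_natCast]
    rw [this]
  have e4 : ((k:ℝ) + 1) ^ 2 / 4 ≤ (k:ℝ) ^ (α * (m:ℝ)) := by
    have h2 : (k:ℝ) ^ (2:ℝ) ≤ (k:ℝ) ^ (α * (m:ℝ)) :=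
      Real.rpow_le_rpow_of_exponent_le hk1 hm2
    have h3 : (k:ℝ) ^ (2:ℝ) = (k:ℝ) ^ 2 := by
      rw [← Real.rpow_natCast (k:ℝ) 2]; norm_num
    rw [h3] at h2
    nlinarith [h2, sq_nonneg ((k:ℝ) - 1), hk1]
  have key : (δ / m) ^ m * (((k:ℝ) + 1) ^ 2 / 4) ≤ Real.exp t := by
    have h5 : (δ / m) ^ m * (((k:ℝ) + 1) ^ 2 / 4) ≤ (δ / m) ^ m * (k:ℝ) ^ (α * (m:ℝ)) := by
      apply mul_le_mul_of_nonneg_left e4 (by positivity)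
    calc (δ / m) ^ m * (((k:ℝ) + 1) ^ 2 / 4) ≤ (δ / m) ^ m * (k:ℝ) ^ (α * (m:ℝ)) := h5
    _ ≤ (t / m) ^ m := e3
    _ ≤ Real.exp (t / m) ^ m := e2
    _ = Real.exp t := e1.symm
  rw [Real.exp_neg]
  have hL : (0:ℝ) < (δ / m) ^ m * (((k:ℝ) + 1) ^ 2 / 4) := by positivity
  have h6 : (Real.exp t)⁻¹ ≤ ((δ / m) ^ m * (((k:ℝ) + 1) ^ 2 / 4))⁻¹ :=
    inv_anti₀ hL key
  refine h6.trans (le_of_eq ?_)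
  rw [div_pow, div_pow]
  have hδm : δ ^ m ≠ 0 := by positivity
  have hk1' : ((k:ℝ) + 1) ^ 2 ≠ 0 := by positivity
  field_simp


/-- First step of the proof of Lemma 1.2: if `Σ_n(β) ≤ n^(1-α)` for all large `n`,
then for every `β'' < β` the functions `f n` decay exponentially fast at `β''`. -/
theorem stmt_2 (α₀ α₁ M : ℝ) (hα : α₀ < α₁) (hM : 0 < M)
    (f f' : ℕ → ℝ → ℝ)
    (hderiv : ∀ n, ∀ x ∈ Set.Icc α₀ α₁,
      HasDerivWithinAt (f n) (f' n x) (Set.Icc α₀ α₁) x)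
    (hmono : ∀ n, MonotoneOn (f n) (Set.Icc α₀ α₁))
    (hrange : ∀ n, ∀ x ∈ Set.Icc α₀ α₁, f n x ∈ Set.Icc 0 M)
    (hf0 : ∀ x ∈ Set.Icc α₀ α₁, 0 < f 0 x)
    (hineq : ∀ n, 1 ≤ n → ∀ x ∈ Set.Icc α₀ α₁,
      f' n x ≥ ((n : ℝ) / (∑ k ∈ Finset.range n, f k x)) * f n x)
    (β : ℝ) (hβ : β ∈ Set.Ioc α₀ α₁)
    (α : ℝ) (hαpos : 0 < α) (N : ℕ) (hN : 1 ≤ N)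
    (hSig : ∀ n : ℕ, N ≤ n → ∑ k ∈ Finset.range n, f k β ≤ (n : ℝ) ^ ((1 : ℝ) - α)) :
    ∀ β'' ∈ Set.Ico α₀ β,
      ∃ c > 0, ∀ᶠ n : ℕ in atTop, f n β'' ≤ M * Real.exp (-c * n) := by
  obtain ⟨hα₀β, hβα₁⟩ := hβ
  intro β'' hβ''
  obtain ⟨hβ''₀, hβ''β⟩ := hβ''
  set β₃ : ℝ := (β'' + β) / 2 with hβ₃def
  have hβ''β₃ : β'' < β₃ := by rw [hβ₃def]; linarith
  have hβ₃β : β₃ < β := by rw [hβ₃def]; linarith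
  set δ : ℝ := β - β₃ with hδdef
  have hδpos : 0 < δ := by rw [hδdef]; linarith
  have hsub1 : Set.Icc β₃ β ⊆ Set.Icc α₀ α₁ :=
    Set.Icc_subset_Icc (by linarith) hβα₁
  have hsub2 : Set.Icc β'' β₃ ⊆ Set.Icc α₀ α₁ :=
    Set.Icc_subset_Icc hβ''₀ (by linarith)
  have hβmem : β ∈ Set.Icc α₀ α₁ := ⟨le_of_lt hα₀β, hβα₁⟩
  have hβ₃mem : β₃ ∈ Set.Icc α₀ α₁ := hsub1 ⟨le_refl _, le_of_lt hβ₃β⟩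
  -- positivity of partial sums
  have hSpos : ∀ n, 1 ≤ n → ∀ x ∈ Set.Icc α₀ α₁, 0 < ∑ k ∈ Finset.range n, f k x := by
    intro n hn x hx
    have h0 : f 0 x ≤ ∑ k ∈ Finset.range n, f k x := by
      apply Finset.single_le_sum (fun k _ => (hrange k x hx).1)
      simpa using Nat.lt_of_succ_le hn
    linarith [hf0 x hx]
  set N' : ℕ := max N 1 with hN'def
  have hN'1 : 1 ≤ N' := le_max_right _ _
  -- Step B : stretched-exponential decay at β₃
  have hB : ∀ k : ℕ, N' ≤ k → f k β₃ ≤ M * Real.exp (-((k:ℝ) ^ α * δ)) := by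
    intro k hk
    have hk1 : 1 ≤ k := le_trans (le_max_right _ _) hk
    have hkN : N ≤ k := le_trans (le_max_left _ _) hk
    have hkpos : (0:ℝ) < (k:ℝ) := by exact_mod_cast hk1
    have hrate : ∀ x ∈ Set.Icc β₃ β, (k:ℝ) ^ α * f k x ≤ f' k x := by
      intro x hx
      have hx' : x ∈ Set.Icc α₀ α₁ := hsub1 hx
      have hSx : ∑ j ∈ Finset.range k, f j x ≤ (k:ℝ) ^ ((1:ℝ) - α) := by
        calc ∑ j ∈ Finset.range k, f j x ≤ ∑ j ∈ Finset.range k, f j β :=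
              Finset.sum_le_sum (fun j _ => hmono j hx' hβmem hx.2)
        _ ≤ (k:ℝ) ^ ((1:ℝ) - α) := hSig k hkN
      have hSp := hSpos k hk1 x hx'
      have hr1 : (k:ℝ) ^ α ≤ (k:ℝ) / ∑ j ∈ Finset.range k, f j x := by
        have heq : (k:ℝ) ^ α = (k:ℝ) / (k:ℝ) ^ ((1:ℝ) - α) := by
          rw [eq_div_iff (ne_of_gt (Real.rpow_pos_of_pos hkpos _)),
            ← Real.rpow_add hkpos]
          simp
        rw [heq]
        exact div_le_div_of_nonneg_left (le_of_lt hkpos) hSp hSx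
      calc (k:ℝ) ^ α * f k x ≤ ((k:ℝ) / ∑ j ∈ Finset.range k, f j x) * f k x :=
            mul_le_mul_of_nonneg_right hr1 (hrange k x hx').1
      _ ≤ f' k x := hineq k hk1 x hx'
    have := aux_gron (le_of_lt hβ₃β) (g := f k) (g' := f' k)
      (fun x hx => (hderiv k x (hsub1 hx)).mono hsub1) hrate
    calc f k β₃ ≤ f k β * Real.exp (-((k:ℝ) ^ α * (β - β₃))) := this
    _ ≤ M * Real.exp (-((k:ℝ) ^ α * δ)) := by
        rw [hδdef]
        exact mul_le_mul_of_nonneg_right (hrange k β hβmem).2 (Real.exp_nonneg _)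
  -- polynomial bound
  obtain ⟨K, hKpos, hK⟩ := aux_poly hδpos hαpos
  -- summability
  have hsum : Summable (fun k : ℕ => 1 / ((k:ℝ) + 1) ^ 2) := by
    have h1 : Summable (fun n : ℕ => 1 / (n:ℝ) ^ 2) :=
      (Real.summable_one_div_nat_pow (p := 2)).2 (by norm_num)
    have := (summable_nat_add_iff 1).2 h1
    simpa using this
  set S : ℝ := ∑' k : ℕ, 1 / ((k:ℝ) + 1) ^ 2 with hSdef
  have hSnn : 0 ≤ S := tsum_nonneg (fun k => by positivity)
  set C : ℝ := N' * M + M * K * S with hCdef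
  have hCpos : 0 < C := by
    have : (0:ℝ) < N' * M := by
      have : (0:ℝ) < (N':ℝ) := by exact_mod_cast hN'1
      positivity
    nlinarith [mul_nonneg (mul_nonneg (le_of_lt hM) (le_of_lt hKpos)) hSnn]
  -- Step D : uniform bound on partial sums at β₃
  have hD : ∀ n : ℕ, ∑ k ∈ Finset.range n, f k β₃ ≤ C := by
    intro n
    have hbound : ∀ k, f k β₃ ≤ (if k < N' then M else 0) + M * K * (1 / ((k:ℝ) + 1) ^ 2) := by
      intro k
      by_cases hkN' : k < N'
      · simp only [if_pos hkN']
        have h1 : f k β₃ ≤ M := (hrange k β₃ hβ₃mem).2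
        have h2 : 0 ≤ M * K * (1 / ((k:ℝ) + 1) ^ 2) := by positivity
        linarith
      · simp only [if_neg hkN', zero_add]
        push_neg at hkN'
        have h1 := hB k hkN'
        have h2 := hK k (le_trans hN'1 hkN')
        calc f k β₃ ≤ M * Real.exp (-((k:ℝ) ^ α * δ)) := h1
        _ ≤ M * (K / ((k:ℝ) + 1) ^ 2) := mul_le_mul_of_nonneg_left h2 (le_of_lt hM)
        _ = M * K * (1 / ((k:ℝ) + 1) ^ 2) := by ring
    calc ∑ k ∈ Finset.range n, f k β₃
        ≤ ∑ k ∈ Finset.range n, ((if k < N' then M else 0) + M * K * (1 / ((k:ℝ) + 1) ^ 2)) :=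
          Finset.sum_le_sum (fun k _ => hbound k)
    _ = (∑ k ∈ Finset.range n, (if k < N' then M else 0))
        + M * K * ∑ k ∈ Finset.range n, 1 / ((k:ℝ) + 1) ^ 2 := by
          rw [Finset.sum_add_distrib, Finset.mul_sum]
    _ ≤ N' * M + M * K * S := by
        gcongr
        · have hfilt : (Finset.range n).filter (fun k => k < N') ⊆ Finset.range N' :=
            fun k hk => Finset.mem_range.2 (Finset.mem_filter.1 hk).2
          have hcard : ((Finset.range n).filter (fun k => k < N')).card ≤ N' := by
            simpa using Finset.card_le_card hfilt
          calc ∑ k ∈ Finset.range n, (if k < N' then M else 0)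
              = ((Finset.range n).filter (fun k => k < N')).card • M := by
                rw [← Finset.sum_filter, Finset.sum_const]
          _ ≤ (N':ℝ) * M := by
                rw [nsmul_eq_mul]
                exact mul_le_mul_of_nonneg_right (by exact_mod_cast hcard) (le_of_lt hM)
        · exact Summable.sum_le_tsum _ (fun k _ => by positivity) hsum
    _ = C := hCdef.symm
  -- Step E : exponential decay at β''
  have hd3 : (0:ℝ) < β₃ - β'' := by linarith
  refine ⟨(β₃ - β'') / C, by positivity, ?_⟩
  rw [eventually_atTop]
  refine ⟨1, fun n hn => ?_⟩
  have hrate2 : ∀ x ∈ Set.Icc β'' β₃, ((n:ℝ) / C) * f n x ≤ f' n x := by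
    intro x hx
    have hx' : x ∈ Set.Icc α₀ α₁ := hsub2 hx
    have hSx : ∑ j ∈ Finset.range n, f j x ≤ C := by
      calc ∑ j ∈ Finset.range n, f j x ≤ ∑ j ∈ Finset.range n, f j β₃ :=
          Finset.sum_le_sum (fun j _ => hmono j hx' hβ₃mem hx.2)
      _ ≤ C := hD n
    have hSp := hSpos n hn x hx'
    have h1 : (n:ℝ) / C ≤ (n:ℝ) / ∑ j ∈ Finset.range n, f j x :=
      div_le_div_of_nonneg_left (Nat.cast_nonneg n) hSp hSx
    calc ((n:ℝ) / C) * f n x ≤ ((n:ℝ) / ∑ j ∈ Finset.range n, f j x) * f n x :=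
        mul_le_mul_of_nonneg_right h1 (hrange n x hx').1
    _ ≤ f' n x := hineq n hn x hx'
  have hfin := aux_gron (le_of_lt hβ''β₃) (g := f n) (g' := f' n)
    (fun x hx => (hderiv n x (hsub2 hx)).mono hsub2) hrate2
  calc f n β'' ≤ f n β₃ * Real.exp (-((n:ℝ) / C * (β₃ - β''))) := hfin
  _ ≤ M * Real.exp (-((β₃ - β'') / C) * n) := by
      have h2 : -((n:ℝ) / C * (β₃ - β'')) = -((β₃ - β'') / C) * n := by ring
      rw [← h2]
      exact mul_le_mul_of_nonneg_right (hrange n β₃ hβ₃mem).2 (Real.exp_nonneg _)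
end

section
/- Let α₀ < α₁ be real numbers and M > 0. Let (f_n)_{n≥0} be a sequence of differentiable, nondecreasing functions f_n : [α₀, α₁] → [0, M] with f_0(x) > 0 for all x, and set Σ_n := Σ_{k=0}^{n-1} f_k. Assume f_n'(x) ≥ (n / Σ_n(x)) · f_n(x) for all n ≥ 1 and x ∈ [α₀, α₁]. Suppose that for some β' ∈ (α₀, α₁] there exists Σ < ∞ such that Σ_n(β') ≤ Σ for all n ≥ 1. Then for every β'' ∈ [α₀, β') and every n ≥ 0, f_n(β'') ≤ M·exp(−((β' − β'')/Σ)·n). -/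
open Filter Real

/-- Second step of the proof of Lemma 1.2: if the sums `Σ_n(β')` are uniformly
bounded by `Σ`, then for every `β'' < β'` we have
`f n β'' ≤ M exp (-((β' - β'')/Σ) n)` for all `n`. -/
theorem stmt_3 (α₀ α₁ M : ℝ) (hα : α₀ < α₁) (hM : 0 < M)
    (f f' : ℕ → ℝ → ℝ)
    (hderiv : ∀ n, ∀ x ∈ Set.Icc α₀ α₁,
      HasDerivWithinAt (f n) (f' n x) (Set.Icc α₀ α₁) x)
    (hmono : ∀ n, MonotoneOn (f n) (Set.Icc α₀ α₁))
    (hrange : ∀ n, ∀ x ∈ Set.Icc α₀ α₁, f n x ∈ Set.Icc 0 M)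
    (hf0 : ∀ x ∈ Set.Icc α₀ α₁, 0 < f 0 x)
    (hineq : ∀ n, 1 ≤ n → ∀ x ∈ Set.Icc α₀ α₁,
      f' n x ≥ ((n : ℝ) / (∑ k ∈ Finset.range n, f k x)) * f n x)
    (β' : ℝ) (hβ' : β' ∈ Set.Ioc α₀ α₁)
    (S : ℝ) (hS : ∀ n : ℕ, 1 ≤ n → ∑ k ∈ Finset.range n, f k β' ≤ S) :
    ∀ β'' ∈ Set.Ico α₀ β', ∀ n : ℕ,
      f n β'' ≤ M * Real.exp (-((β' - β'') / S) * n) := by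
  have hβ'mem : β' ∈ Set.Icc α₀ α₁ := ⟨hβ'.1.le, hβ'.2⟩
  have hS0 : 0 < S := by
    have h1 := hS 1 le_rfl
    simp only [Finset.range_one, Finset.sum_singleton] at h1
    exact lt_of_lt_of_le (hf0 β' hβ'mem) h1
  intro β'' hβ'' n
  have hβ''mem : β'' ∈ Set.Icc α₀ α₁ := ⟨hβ''.1, hβ''.2.le.trans hβ'.2⟩
  rcases Nat.eq_zero_or_pos n with hn | hn
  · subst hn
    simpa using (hrange 0 β'' hβ''mem).2
  -- general case
  set c : ℝ := (n : ℝ) / S with hc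
  have hsub : Set.Icc α₀ β' ⊆ Set.Icc α₀ α₁ := Set.Icc_subset_Icc le_rfl hβ'.2
  have hsubi : interior (Set.Icc α₀ β') ⊆ Set.Icc α₀ α₁ := interior_subset.trans hsub
  set g : ℝ → ℝ := fun x => f n x * Real.exp (-c * x) with hg
  have key : MonotoneOn g (Set.Icc α₀ β') := by
    apply monotoneOn_of_hasDerivWithinAt_nonneg (convex_Icc _ _)
      (f' := fun x => (f' n x - c * f n x) * Real.exp (-c * x))
    · intro x hx
      exact ((hderiv n x (hsub hx)).continuousWithinAt.mono hsub).mul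
        (Real.continuous_exp.comp (continuous_const.mul continuous_id)).continuousWithinAt
    · intro x hx
      have h1 : HasDerivWithinAt (fun x => Real.exp (-c * x)) (-c * Real.exp (-c * x))
          (interior (Set.Icc α₀ β')) x := by
        simpa [mul_comm] using
          (((hasDerivAt_id x).const_mul (-c)).exp).hasDerivWithinAt
          (s := interior (Set.Icc α₀ β'))
      have h2 := ((hderiv n x (hsubi hx)).mono hsubi).mul h1
      refine h2.congr_deriv ?_
      ring
    · intro x hx
      rw [interior_Icc] at hx
      have hxmem : x ∈ Set.Icc α₀ α₁ := ⟨hx.1.le, hx.2.le.trans hβ'.2⟩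
      have hfx0 : 0 ≤ f n x := (hrange n x hxmem).1
      have hsum_pos : 0 < ∑ k ∈ Finset.range n, f k x := by
        have : 0 < f 0 x := hf0 x hxmem
        refine Finset.sum_pos' (fun k _ => (hrange k x hxmem).1) ⟨0, ?_, this⟩
        simp [hn]
      have hsum_le : ∑ k ∈ Finset.range n, f k x ≤ S := by
        refine le_trans ?_ (hS n hn)
        exact Finset.sum_le_sum fun k _ => hmono k hxmem hβ'mem hx.2.le
      have hdivle : c ≤ (n : ℝ) / (∑ k ∈ Finset.range n, f k x) :=
        div_le_div_of_nonneg_left (Nat.cast_nonneg n) hsum_pos hsum_le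
      have h3 : c * f n x ≤ f' n x :=
        le_trans (mul_le_mul_of_nonneg_right hdivle hfx0) (hineq n hn x hxmem)
      have := Real.exp_pos (-c * x)
      nlinarith
  have hmem1 : β'' ∈ Set.Icc α₀ β' := ⟨hβ''.1, hβ''.2.le⟩
  have hmem2 : β' ∈ Set.Icc α₀ β' := ⟨hβ'.1.le, le_rfl⟩
  have h4 : f n β'' * Real.exp (-c * β'') ≤ f n β' * Real.exp (-c * β') :=
    key hmem1 hmem2 hβ''.2.le
  have h5 : f n β' * Real.exp (-c * β') ≤ M * Real.exp (-c * β') :=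
    mul_le_mul_of_nonneg_right (hrange n β' hβ'mem).2 (Real.exp_pos _).le
  have h6 : f n β'' * Real.exp (-c * β'') ≤ M * Real.exp (-c * β') := h4.trans h5
  have hexp : Real.exp (-((β' - β'') / S) * n) = Real.exp (-c * β') / Real.exp (-c * β'') := by
    rw [← Real.exp_sub]
    congr 1
    rw [hc]
    field_simp
    ring
  rw [hexp, ← mul_div_assoc, le_div_iff₀ (Real.exp_pos _)]
  linarith [h6]
end

section
/- Let α₀ < α₁ be real numbers and M > 0. Let (f_n)_{n≥0} be a sequence of differentiable, nondecreasing functions f_n : [α₀, α₁] → [0, M] that converges pointwise to f, with f_0(x) > 0 for all x, and set Σ_n := Σ_{k=0}^{n-1} f_k. Assume f_n'(x) ≥ (n / Σ_n(x)) · f_n(x) for all n ≥ 1 and x ∈ [α₀, α₁]. Then for all β', β ∈ [α₀, α₁] with β' < β, f(β) − f(β') ≥ (β − β') · limsup_{n→∞} (log Σ_n(β'))/(log n). -/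
open Filter Real Set

set_option maxHeartbeats 1000000

namespace Stmt4Aux

/-- `x² A ≤ A^x` for `A ≥ 4`, `x ≥ 1`. -/
lemma sq_mul_le_pow {A : ℝ} (hA : 4 ≤ A) :
    ∀ x : ℕ, 1 ≤ x → ((x : ℝ)) ^ 2 * A ≤ A ^ x := by
  intro x hx
  induction x, hx using Nat.le_induction with
  | base => norm_num
  | succ x hx ih =>
    have hA0 : (0:ℝ) < A := by linarith
    have hx1 : (1:ℝ) ≤ (x:ℝ) := by exact_mod_cast hx
    have h2 : A ^ (x+1) = A ^ x * A := pow_succ A x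
    have h3 : ((x:ℝ))^2 * A * A ≤ A ^ x * A :=
      mul_le_mul_of_nonneg_right ih hA0.le
    have key : ((x:ℝ)+1)^2 ≤ (x:ℝ)^2 * A := by nlinarith
    have h4 : ((x:ℝ)+1)^2 * A ≤ ((x:ℝ)^2 * A) * A :=
      mul_le_mul_of_nonneg_right key hA0.le
    push_cast
    rw [h2]
    nlinarith [h3, h4]

/-- Core Grönwall-type comparison: if `c * Σₙ(v) ≤ n` then
`f n u * exp (c (v-u)) ≤ f n v`. -/
lemma core {α₀ α₁ : ℝ} {f f' : ℕ → ℝ → ℝ}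
    (hderiv : ∀ n, ∀ x ∈ Set.Icc α₀ α₁,
      HasDerivWithinAt (f n) (f' n x) (Set.Icc α₀ α₁) x)
    (hmono : ∀ n, MonotoneOn (f n) (Set.Icc α₀ α₁))
    (hrange0 : ∀ n, ∀ x ∈ Set.Icc α₀ α₁, 0 ≤ f n x)
    (hf0 : ∀ x ∈ Set.Icc α₀ α₁, 0 < f 0 x)
    (hineq : ∀ n, 1 ≤ n → ∀ x ∈ Set.Icc α₀ α₁,
      f' n x ≥ ((n : ℝ) / (∑ k ∈ Finset.range n, f k x)) * f n x)
    {n : ℕ} (hn : 1 ≤ n) {u v : ℝ} (hu : u ∈ Set.Icc α₀ α₁) (hv : v ∈ Set.Icc α₀ α₁)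
    (huv : u ≤ v) {c : ℝ} (hc0 : 0 ≤ c)
    (hcS : c * (∑ k ∈ Finset.range n, f k v) ≤ n) :
    f n u * Real.exp (c * (v - u)) ≤ f n v := by
  have hsub : Set.Icc u v ⊆ Set.Icc α₀ α₁ := Set.Icc_subset_Icc hu.1 hv.2
  set g : ℝ → ℝ := fun x => f n x * Real.exp (-(c * x)) with hg
  have hgmono : MonotoneOn g (Set.Icc u v) := by
    apply monotoneOn_of_deriv_nonneg (convex_Icc u v)
    · -- continuity of g on Icc u v
      have hfc : ContinuousOn (f n) (Set.Icc u v) := fun x hx =>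
        ((hderiv n x (hsub hx)).continuousWithinAt).mono hsub
      exact hfc.mul ((Continuous.comp Real.continuous_exp (by continuity)).continuousOn)
    · -- differentiability on interior
      rw [interior_Icc]
      intro x hx
      have hx' : x ∈ Set.Icc α₀ α₁ := hsub (Set.Ioo_subset_Icc_self hx)
      have hnb : Set.Icc α₀ α₁ ∈ nhds x :=
        Icc_mem_nhds (lt_of_le_of_lt hu.1 hx.1) (lt_of_lt_of_le hx.2 hv.2)
      have hfd : HasDerivAt (f n) (f' n x) x := (hderiv n x hx').hasDerivAt hnb
      have hed : HasDerivAt (fun y => Real.exp (-(c * y)))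
          (Real.exp (-(c * x)) * -(c * 1)) x :=
        (((hasDerivAt_id x).const_mul c).neg).exp
      exact (hfd.mul hed).differentiableAt.differentiableWithinAt
    · rw [interior_Icc]
      intro x hx
      have hx' : x ∈ Set.Icc α₀ α₁ := hsub (Set.Ioo_subset_Icc_self hx)
      have hnb : Set.Icc α₀ α₁ ∈ nhds x :=
        Icc_mem_nhds (lt_of_le_of_lt hu.1 hx.1) (lt_of_lt_of_le hx.2 hv.2)
      have hfd : HasDerivAt (f n) (f' n x) x := (hderiv n x hx').hasDerivAt hnb
      have hed : HasDerivAt (fun y => Real.exp (-(c * y)))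
          (Real.exp (-(c * x)) * -(c * 1)) x :=
        (((hasDerivAt_id x).const_mul c).neg).exp
      have hgd : HasDerivAt g
          (f' n x * Real.exp (-(c * x)) + f n x * (Real.exp (-(c * x)) * -(c * 1))) x :=
        hfd.mul hed
      rw [hgd.deriv]
      -- show nonnegativity
      have hS : 0 < ∑ k ∈ Finset.range n, f k x := by
        apply Finset.sum_pos' (fun k _ => hrange0 k x hx')
        exact ⟨0, Finset.mem_range.2 hn, hf0 x hx'⟩
      have hSv : (∑ k ∈ Finset.range n, f k x) ≤ (∑ k ∈ Finset.range n, f k v) :=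
        Finset.sum_le_sum fun k _ => hmono k hx' hv hx.2.le
      have hcn : c ≤ (n : ℝ) / (∑ k ∈ Finset.range n, f k x) := by
        rw [le_div_iff₀ hS]
        calc c * (∑ k ∈ Finset.range n, f k x) ≤ c * (∑ k ∈ Finset.range n, f k v) :=
              mul_le_mul_of_nonneg_left hSv hc0
          _ ≤ n := hcS
      have h2 : c * f n x ≤ ((n : ℝ) / (∑ k ∈ Finset.range n, f k x)) * f n x :=
        mul_le_mul_of_nonneg_right hcn (hrange0 n x hx')
      have h3 := hineq n hn x hx'
      have h4 : 0 ≤ Real.exp (-(c * x)) * (f' n x - c * f n x) :=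
        mul_nonneg (Real.exp_nonneg _) (by linarith)
      nlinarith [h4]
  have hguv : g u ≤ g v := hgmono ⟨le_refl u, huv⟩ ⟨huv, le_refl v⟩ huv
  have h5 := mul_le_mul_of_nonneg_right hguv (Real.exp_nonneg (c * v))
  have e1 : f n u * Real.exp (-(c * u)) * Real.exp (c * v) = f n u * Real.exp (c * (v - u)) := by
    rw [mul_assoc, ← Real.exp_add]
    congr 2
    ring
  have e2 : f n v * Real.exp (-(c * v)) * Real.exp (c * v) = f n v := by
    rw [mul_assoc, ← Real.exp_add]
    simp
  simp only [hg] at h5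
  rw [e1, e2] at h5
  exact h5

/-- The increment bound in the positive case : `b - a ≤ F b - F a` when `F a > 0`. -/
lemma posCase {α₀ α₁ M : ℝ} {f f' : ℕ → ℝ → ℝ} {F : ℝ → ℝ}
    (hderiv : ∀ n, ∀ x ∈ Set.Icc α₀ α₁,
      HasDerivWithinAt (f n) (f' n x) (Set.Icc α₀ α₁) x)
    (hmono : ∀ n, MonotoneOn (f n) (Set.Icc α₀ α₁))
    (hrange0 : ∀ n, ∀ x ∈ Set.Icc α₀ α₁, 0 ≤ f n x)
    (hconv : ∀ x ∈ Set.Icc α₀ α₁, Tendsto (fun n => f n x) atTop (nhds (F x)))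
    (hf0 : ∀ x ∈ Set.Icc α₀ α₁, 0 < f 0 x)
    (hineq : ∀ n, 1 ≤ n → ∀ x ∈ Set.Icc α₀ α₁,
      f' n x ≥ ((n : ℝ) / (∑ k ∈ Finset.range n, f k x)) * f n x)
    {a b : ℝ} (ha : a ∈ Set.Icc α₀ α₁) (hb : b ∈ Set.Icc α₀ α₁) (hab : a < b)
    (hFa : 0 < F a) : b - a ≤ F b - F a := by
  have hFmono : ∀ x ∈ Set.Icc α₀ α₁, ∀ y ∈ Set.Icc α₀ α₁, x ≤ y → F x ≤ F y := by
    intro x hx y hy hxy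
    exact le_of_tendsto_of_tendsto' (hconv x hx) (hconv y hy) fun n => hmono n hx hy hxy
  -- Basic estimate
  have keyBE : ∀ u v : ℝ, u ∈ Set.Icc α₀ α₁ → v ∈ Set.Icc α₀ α₁ → u ≤ v → 0 < F v →
      F u * Real.exp ((F v)⁻¹ * (v - u)) ≤ F v := by
    intro u v hu hv huv hFv
    have hSv : ∀ n : ℕ, 1 ≤ n → 0 < ∑ k ∈ Finset.range n, f k v := by
      intro n hn
      apply Finset.sum_pos' (fun k _ => hrange0 k v hv)
      exact ⟨0, Finset.mem_range.2 hn, hf0 v hv⟩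
    have hle : ∀ᶠ n : ℕ in atTop,
        f n u * Real.exp (((n : ℝ) / (∑ k ∈ Finset.range n, f k v)) * (v - u)) ≤ f n v := by
      filter_upwards [eventually_ge_atTop 1] with n hn
      refine core hderiv hmono hrange0 hf0 hineq hn hu hv huv
        (div_nonneg (Nat.cast_nonneg n) (hSv n hn).le) ?_
      rw [div_mul_eq_mul_div, mul_div_assoc, div_self (hSv n hn).ne', mul_one]
    have havg : Tendsto (fun n : ℕ => (∑ k ∈ Finset.range n, f k v) / n) atTop (nhds (F v)) := by
      have := (hconv v hv).cesaro
      simpa [div_eq_inv_mul] using this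
    have h1 : Tendsto (fun n : ℕ => (n : ℝ) / (∑ k ∈ Finset.range n, f k v)) atTop
        (nhds ((F v)⁻¹)) := by
      have := havg.inv₀ hFv.ne'
      simpa [inv_div] using this
    have h2 : Tendsto (fun n : ℕ =>
        f n u * Real.exp (((n : ℝ) / (∑ k ∈ Finset.range n, f k v)) * (v - u))) atTop
        (nhds (F u * Real.exp ((F v)⁻¹ * (v - u)))) :=
      (hconv u hu).mul ((Real.continuous_exp.tendsto _).comp (h1.mul_const (v - u)))
    exact le_of_tendsto_of_tendsto h2 (hconv v hv) hle
  -- partition argument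
  have hstep : ∀ u v : ℝ, u ∈ Set.Icc α₀ α₁ → v ∈ Set.Icc α₀ α₁ →
      a ≤ u → u ≤ v → v ≤ b →
      v - u ≤ (F v - F u) + (F v - F u) * (v - u) / F a := by
    intro u v hu hv hau huv hvb
    have hFau : F a ≤ F u := hFmono a ha u hu hau
    have hFuv : F u ≤ F v := hFmono u hu v hv huv
    have hFv : 0 < F v := lt_of_lt_of_le hFa (le_trans hFau hFuv)
    have hFu0 : 0 < F u := lt_of_lt_of_le hFa hFau
    have hBE := keyBE u v hu hv huv hFv
    have hexp : F u * (1 + (F v)⁻¹ * (v - u)) ≤ F u * Real.exp ((F v)⁻¹ * (v - u)) := by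
      apply mul_le_mul_of_nonneg_left _ hFu0.le
      have := Real.add_one_le_exp ((F v)⁻¹ * (v - u))
      linarith
    have hx : (F v)⁻¹ * (v - u) ≥ 0 :=
      mul_nonneg (inv_nonneg.2 hFv.le) (by linarith)
    -- F v - F u ≥ F u * (v-u) / F v,  i.e.  (F v - F u) * F v ≥ F u * (v - u)
    have k1 : F u * (v - u) ≤ (F v - F u) * F v := by
      have h6 : F u + F u * ((F v)⁻¹ * (v - u)) ≤ F v := by
        have := le_trans hexp hBE
        nlinarith
      have h7 : F u * ((F v)⁻¹ * (v - u)) ≤ F v - F u := by linarith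
      have := mul_le_mul_of_nonneg_right h7 hFv.le
      calc F u * (v - u) = F u * ((F v)⁻¹ * (v - u)) * F v := by
            field_simp
          _ ≤ (F v - F u) * F v := this
    -- conclude : v - u ≤ d + d*(v-u)/F v ≤ d + d*(v-u)/F a
    set d := F v - F u with hd
    have hd0 : 0 ≤ d := by rw [hd]; linarith
    have h8 : (v - u) * F v ≤ d * F v + d * (v - u) := by nlinarith [k1]
    have h9 : v - u ≤ d + d * (v - u) / F v := by
      rw [← mul_le_mul_iff_left₀ hFv]
      calc (v - u) * F v ≤ d * F v + d * (v - u) := h8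
        _ = (d + d * (v - u) / F v) * F v := by field_simp
    have h10 : d * (v - u) / F v ≤ d * (v - u) / F a :=
      div_le_div_of_nonneg_left (mul_nonneg hd0 (by linarith)) hFa (le_trans hFau hFuv)
    linarith
  -- sum over a partition with m pieces
  have hm : ∀ m : ℕ, 1 ≤ m →
      b - a ≤ (F b - F a) + (F b - F a) * ((b - a) / m) / F a := by
    intro m hm1
    have hmR : (0:ℝ) < m := by exact_mod_cast hm1
    set Δ : ℝ := (b - a) / m with hΔ
    have hΔ0 : 0 < Δ := div_pos (by linarith) hmR
    set y : ℕ → ℝ := fun i => a + i * Δ with hy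
    have hy0 : y 0 = a := by simp [hy]
    have hym : y m = b := by
      simp only [hy, hΔ]
      field_simp
      ring
    have hmem : ∀ i : ℕ, i ≤ m → y i ∈ Set.Icc a b := by
      intro i hi
      constructor
      · simp only [hy]
        nlinarith [hΔ0, Nat.cast_nonneg (α := ℝ) i]
      · have hiR : (i:ℝ) ≤ m := by exact_mod_cast hi
        simp only [hy]
        have : (i:ℝ) * Δ ≤ m * Δ := mul_le_mul_of_nonneg_right hiR hΔ0.le
        have hmΔ : (m:ℝ) * Δ = b - a := by
          rw [hΔ]; field_simp
        linarith
    have hmemI : ∀ i : ℕ, i ≤ m → y i ∈ Set.Icc α₀ α₁ := fun i hi =>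
      ⟨le_trans ha.1 (hmem i hi).1, le_trans (hmem i hi).2 hb.2⟩
    have hterm : ∀ i ∈ Finset.range m,
        Δ ≤ (F (y (i+1)) - F (y i)) + (F (y (i+1)) - F (y i)) * Δ / F a := by
      intro i hi
      have hi' := Finset.mem_range.1 hi
      have h1 := hmem i hi'.le
      have h2 := hmem (i+1) hi'
      have hstep' := hstep (y i) (y (i+1)) (hmemI i hi'.le) (hmemI (i+1) hi')
        h1.1 (by simp only [hy]; push_cast; nlinarith [hΔ0]) h2.2
      have hdiff : y (i+1) - y i = Δ := by simp only [hy]; push_cast; ring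
      rw [hdiff] at hstep'
      exact hstep'
    have hsum := Finset.sum_le_sum hterm
    have hsum1 : ∑ _i ∈ Finset.range m, Δ = b - a := by
      rw [Finset.sum_const, Finset.card_range, nsmul_eq_mul, hΔ]
      field_simp
    have hsum2 : ∑ i ∈ Finset.range m,
        ((F (y (i+1)) - F (y i)) + (F (y (i+1)) - F (y i)) * Δ / F a)
        = (F b - F a) + (F b - F a) * Δ / F a := by
      rw [Finset.sum_add_distrib]
      have t1 : ∑ i ∈ Finset.range m, (F (y (i+1)) - F (y i)) = F b - F a := by
        rw [Finset.sum_range_sub (fun i => F (y i))]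
        rw [hy0, hym]
      have t2 : ∑ i ∈ Finset.range m, (F (y (i+1)) - F (y i)) * Δ / F a
          = (F b - F a) * Δ / F a := by
        rw [← Finset.sum_div, ← Finset.sum_mul, t1]
      rw [t1, t2]
    rw [hsum1, hsum2] at hsum
    exact hsum
  -- let m → ∞
  have htend : Tendsto (fun m : ℕ => (F b - F a) + (F b - F a) * ((b - a) / m) / F a)
      atTop (nhds (F b - F a)) := by
    have h1 : Tendsto (fun m : ℕ => (F b - F a) * (b - a) / F a / m) atTop (nhds 0) :=
      tendsto_const_div_atTop_nhds_zero_nat _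
    have h2 : Tendsto (fun m : ℕ => (F b - F a) + (F b - F a) * (b - a) / F a / m) atTop
        (nhds (F b - F a + 0)) := tendsto_const_nhds.add h1
    rw [add_zero] at h2
    refine h2.congr fun m => ?_
    ring
  refine ge_of_tendsto htend ?_
  filter_upwards [eventually_ge_atTop 1] with m hm1
  exact hm m hm1

/-- Cascade lemma: if `F` vanishes at some point `w > b`, then the partial sums at `b`
are bounded. -/
lemma lemA {α₀ α₁ M : ℝ} {f f' : ℕ → ℝ → ℝ} (hM : 0 < M)
    (hderiv : ∀ n, ∀ x ∈ Set.Icc α₀ α₁,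
      HasDerivWithinAt (f n) (f' n x) (Set.Icc α₀ α₁) x)
    (hmono : ∀ n, MonotoneOn (f n) (Set.Icc α₀ α₁))
    (hrange : ∀ n, ∀ x ∈ Set.Icc α₀ α₁, f n x ∈ Set.Icc 0 M)
    (hf0 : ∀ x ∈ Set.Icc α₀ α₁, 0 < f 0 x)
    (hineq : ∀ n, 1 ≤ n → ∀ x ∈ Set.Icc α₀ α₁,
      f' n x ≥ ((n : ℝ) / (∑ k ∈ Finset.range n, f k x)) * f n x)
    {b w : ℝ} (hb : b ∈ Set.Icc α₀ α₁) (hw : w ∈ Set.Icc α₀ α₁) (hbw : b < w)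
    (hzero : Tendsto (fun k => f k w) atTop (nhds 0)) :
    ∃ B : ℝ, ∀ n : ℕ, (∑ k ∈ Finset.range n, f k b) ≤ B := by
  set M' : ℝ := max M 1 with hM'
  have hM1 : (1:ℝ) ≤ M' := le_max_right M 1
  have hM0 : (0:ℝ) < M' := by linarith
  have hrange0 : ∀ n, ∀ x ∈ Set.Icc α₀ α₁, 0 ≤ f n x := fun n x hx => (hrange n x hx).1
  have hrangeM : ∀ n, ∀ x ∈ Set.Icc α₀ α₁, f n x ≤ M' := fun n x hx =>
    le_trans (hrange n x hx).2 (le_max_left M 1)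
  set δ : ℝ := (w - b) / 4 with hδ
  have hδ0 : 0 < δ := by rw [hδ]; linarith
  have hwb : w = b + 4 * δ := by rw [hδ]; ring
  -- choose T and A
  obtain ⟨T, hT4, hTA⟩ : ∃ T : ℝ, 4 ≤ T ∧
      Real.log (18 * M' * M') + 4 * T ≤ δ * Real.exp T := by
    have h1 : Tendsto (fun T : ℝ => (Real.log (18 * M' * M') + 4 * T) * Real.exp (-T))
        atTop (nhds 0) := by
      have ha : Tendsto (fun T : ℝ => Real.log (18 * M' * M') * Real.exp (-T)) atTop
          (nhds (Real.log (18 * M' * M') * 0)) :=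
        Real.tendsto_exp_neg_atTop_nhds_zero.const_mul _
      have hbb : Tendsto (fun T : ℝ => 4 * (T * Real.exp (-T))) atTop (nhds (4 * 0)) := by
        have := Real.tendsto_pow_mul_exp_neg_atTop_nhds_zero 1
        simp only [pow_one] at this
        exact this.const_mul 4
      have := ha.add hbb
      simp only [mul_zero, add_zero] at this
      refine this.congr fun T => ?_
      ring
    have h2 := (h1.eventually_lt_const hδ0).and (eventually_ge_atTop (4:ℝ))
    obtain ⟨T, hT1, hT2⟩ := h2.exists
    refine ⟨T, hT2, ?_⟩
    have h3 := mul_le_mul_of_nonneg_right hT1.le (Real.exp_nonneg T)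
    rw [mul_assoc, ← Real.exp_add, neg_add_cancel, Real.exp_zero, mul_one] at h3
    exact h3
  set A : ℝ := Real.exp T with hA
  have hA0 : 0 < A := Real.exp_pos T
  have hT0 : (0:ℝ) ≤ T := by linarith
  have hA4 : 4 ≤ A := by
    have := Real.add_one_le_exp T
    rw [← hA] at this
    linarith
  have hA1 : (1:ℝ) ≤ A := by linarith
  have hlogA : Real.log A = T := Real.log_exp T
  set c : ℝ := Real.log (18 * M' * M') with hc
  have hc0 : 0 ≤ c := Real.log_nonneg (by nlinarith)
  set Ai : ℕ → ℝ := fun i => A ^ (2 ^ i) with hAi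
  have hAipos : ∀ i, 0 < Ai i := fun i => pow_pos hA0 _
  have hAi4 : ∀ i, 4 ≤ Ai i := by
    intro i
    calc (4:ℝ) ≤ A := hA4
      _ ≤ A ^ (2 ^ i) := le_self_pow₀ hA1 (Nat.pos_of_ne_zero (by positivity)).ne'
  have hAi1 : ∀ i, (1:ℝ) ≤ Ai i := fun i => le_trans (by norm_num) (hAi4 i)
  have hAisq : ∀ i, Ai (i+1) = (Ai i) ^ 2 := by
    intro i
    simp only [hAi]
    rw [pow_succ, pow_mul]
  have hlogAi : ∀ i, Real.log (Ai i) = (2:ℝ) ^ i * T := by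
    intro i
    simp only [hAi]
    rw [Real.log_pow, hlogA]
    push_cast
    ring
  -- main growth estimate
  have hmain : ∀ i : ℕ, (4:ℝ) ^ i * (c + 4 * T) ≤ δ * Ai i := by
    intro i
    have h1 := sq_mul_le_pow hA4 (2 ^ i) Nat.one_le_two_pow
    have h2 : ((2:ℝ) ^ i) ^ 2 * A ≤ Ai i := by
      simp only [hAi]
      convert h1 using 3
      push_cast
      ring
    have h3 : ((2:ℝ) ^ i) ^ 2 = (4:ℝ) ^ i := by
      rw [← pow_mul, mul_comm, pow_mul]
      norm_num
    rw [h3] at h2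
    have h4 : (4:ℝ) ^ i * (c + 4 * T) ≤ (4:ℝ) ^ i * (δ * A) :=
      mul_le_mul_of_nonneg_left hTA (by positivity)
    calc (4:ℝ) ^ i * (c + 4 * T) ≤ (4:ℝ) ^ i * (δ * A) := h4
      _ = δ * ((4:ℝ) ^ i * A) := by ring
      _ ≤ δ * Ai i := mul_le_mul_of_nonneg_left h2 hδ0.le
  -- seed
  have hces : Tendsto (fun k : ℕ => (∑ j ∈ Finset.range k, f j w) / k) atTop (nhds 0) := by
    have := hzero.cesaro
    simpa [div_eq_inv_mul] using this
  obtain ⟨K₁, hK₁⟩ := eventually_atTop.1 (hces.eventually_lt_const (show (0:ℝ) < 1/A by positivity))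
  set K₀ : ℕ := max K₁ 1 with hK₀
  have hK₀1 : 1 ≤ K₀ := le_max_right K₁ 1
  have hK₀R : (1:ℝ) ≤ (K₀:ℝ) := by exact_mod_cast hK₀1
  have hseed : ∀ k : ℕ, K₀ ≤ k → (∑ j ∈ Finset.range k, f j w) ≤ k / A := by
    intro k hk
    have hk1 : 1 ≤ k := le_trans hK₀1 hk
    have hkR : (0:ℝ) < k := by exact_mod_cast hk1
    have := (hK₁ k (le_trans (le_max_left K₁ 1) hk)).le
    calc (∑ j ∈ Finset.range k, f j w) = ((∑ j ∈ Finset.range k, f j w) / k) * k := by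
          field_simp
      _ ≤ (1/A) * k := mul_le_mul_of_nonneg_right this hkR.le
      _ = k / A := by ring
  -- length bounds
  have hlen : ∀ i : ℕ, Real.log (2 * M' * (Ai i) ^ 2) / Ai i ≤ δ * (1/2) ^ i := by
    intro i
    rw [div_le_iff₀ (hAipos i)]
    have h1 : Real.log (2 * M' * (Ai i) ^ 2) = Real.log (2 * M') + 2 * ((2:ℝ)^i * T) := by
      rw [Real.log_mul (by positivity) (by positivity), Real.log_pow, hlogAi]
      push_cast
      ring
    have h2 : Real.log (2 * M') ≤ c := by
      rw [hc]
      apply Real.log_le_log (by positivity)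
      nlinarith
    have h3 : Real.log (2 * M' * (Ai i) ^ 2) ≤ (2:ℝ)^i * (c + 4 * T) := by
      rw [h1]
      have h2i : (1:ℝ) ≤ 2^i := by
        simpa using pow_le_pow_left₀ (by norm_num : (0:ℝ) ≤ 1) (by norm_num : (1:ℝ) ≤ 2) i
      have hc2 : c ≤ (2:ℝ)^i * c := le_mul_of_one_le_left hc0 h2i
      nlinarith [pow_pos (show (0:ℝ) < 2 by norm_num) i, hT0, h2]
    have h4 : (2:ℝ)^i * (c + 4 * T) ≤ δ * (1/2)^i * Ai i := by
      have := hmain i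
      have e1 : δ * (1/2)^i * Ai i = (1/2)^i * (δ * Ai i) := by ring
      have e2 : (1/2:ℝ)^i * ((4:ℝ)^i * (c + 4*T)) = (2:ℝ)^i * (c + 4*T) := by
        rw [← mul_assoc, ← mul_pow]
        norm_num
      rw [e1, ← e2]
      exact mul_le_mul_of_nonneg_left this (by positivity)
    linarith
  -- decay estimate (C2')
  have hC2 : ∀ i : ℕ, (3*M')^(i+1) * (Ai i)^4 * Real.exp (-(2*δ*Ai i)) ≤ (1/2)^i := by
    intro i
    have e3 : ((3:ℝ)*M')^(i+1) = Real.exp (((i:ℝ)+1) * Real.log (3*M')) := by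
      rw [show ((i:ℝ)+1) = ((i+1 : ℕ) : ℝ) by push_cast; ring, Real.exp_nat_mul,
        Real.exp_log (by positivity)]
    have e4 : (Ai i)^4 = Real.exp ((2:ℝ)^i * 4 * T) := by
      simp only [hAi, hA]
      rw [← pow_mul, ← Real.exp_nat_mul]
      congr 1
      push_cast
      ring
    have e5 : ((1:ℝ)/2)^i = Real.exp (-((i:ℝ) * Real.log 2)) := by
      rw [Real.exp_neg, Real.exp_nat_mul, Real.exp_log (by norm_num)]
      rw [← inv_pow, one_div]
    rw [e3, e4, e5, ← Real.exp_add, ← Real.exp_add, Real.exp_le_exp]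
    -- exponent inequality
    have b1 : ((i:ℝ)+1) ≤ (2:ℝ)^i := by
      have := Nat.lt_two_pow_self (n := i)
      have : (i:ℝ) + 1 ≤ ((2:ℕ)^i : ℝ) := by exact_mod_cast this
      simpa using this
    have b2 : (i:ℝ) ≤ (2:ℝ)^i := by linarith
    have b3 : (0:ℝ) ≤ Real.log (3*M') := Real.log_nonneg (by nlinarith)
    have b4 : (0:ℝ) ≤ Real.log 2 := Real.log_nonneg (by norm_num)
    have b5 : Real.log (3*M') + Real.log 2 ≤ c := by
      rw [hc, ← Real.log_mul (by positivity) (by norm_num)]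
      apply Real.log_le_log (by positivity)
      nlinarith
    have b6 : ((i:ℝ)+1) * Real.log (3*M') + (i:ℝ) * Real.log 2 + (2:ℝ)^i * 4 * T
        ≤ (2:ℝ)^i * (c + 4 * T) := by
      have t1 : ((i:ℝ)+1) * Real.log (3*M') ≤ (2:ℝ)^i * Real.log (3*M') :=
        mul_le_mul_of_nonneg_right b1 b3
      have t2 : (i:ℝ) * Real.log 2 ≤ (2:ℝ)^i * Real.log 2 :=
        mul_le_mul_of_nonneg_right b2 b4
      have t3 : (2:ℝ)^i * (Real.log (3*M') + Real.log 2) ≤ (2:ℝ)^i * c :=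
        mul_le_mul_of_nonneg_left b5 (by positivity)
      nlinarith [t1, t2, t3]
    have b7 : (2:ℝ)^i * (c + 4 * T) ≤ (4:ℝ)^i * (c + 4*T) := by
      apply mul_le_mul_of_nonneg_right _ (by positivity)
      apply pow_le_pow_left₀ (by norm_num) (by norm_num)
    have b8 := le_trans (le_trans b6 b7) (hmain i)
    have b9 : 0 ≤ δ * Ai i := (mul_pos hδ0 (hAipos i)).le
    linarith
  -- the induction
  have IND : ∀ i : ℕ, ∃ z : ℝ, ∃ K : ℕ,
      (w - z ≤ 2*δ*(1 - (1/2)^i)) ∧ (z ≤ w) ∧ (i + 1 ≤ K) ∧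
      ((K:ℝ) ≤ (K₀:ℝ) * (3*M')^i * (Ai i)^2) ∧
      (∀ k : ℕ, K ≤ k → (∑ j ∈ Finset.range k, f j z) ≤ (k:ℝ) / Ai i) ∧
      ((∑ j ∈ Finset.range K, f j b) ≤ M'*K₀ + 2*M'*K₀*(1 - (1/2)^i)) := by
    intro i
    induction i with
    | zero =>
      refine ⟨w, K₀, by norm_num, le_refl w, hK₀1, ?_, ?_, ?_⟩
      · have h1 : (1:ℝ) ≤ (Ai 0)^2 := by nlinarith [hAi1 0]
        have h2 : (K₀:ℝ) * 1 ≤ (K₀:ℝ) * (Ai 0)^2 :=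
          mul_le_mul_of_nonneg_left h1 (Nat.cast_nonneg K₀)
        simpa [pow_zero] using h2
      · intro k hk
        have := hseed k hk
        simpa [hAi] using this
      · simp only [pow_zero]
        norm_num
        calc (∑ j ∈ Finset.range K₀, f j b) ≤ (K₀:ℝ) * M' := by
              have := Finset.sum_le_card_nsmul (Finset.range K₀) (fun j => f j b) M'
                (fun j _ => hrangeM j b hb)
              simpa [Finset.card_range, nsmul_eq_mul] using this
          _ = M' * K₀ := by ring
    | succ i ih =>
      obtain ⟨z, K, hlenz, hzw, hKge, hKle, hP, hSb⟩ := ih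
      have hAipos' := hAipos i
      have hAi4' := hAi4 i
      set ℓ : ℝ := Real.log (2 * M' * (Ai i) ^ 2) / Ai i with hℓ
      have hlogpos : 0 < Real.log (2 * M' * (Ai i) ^ 2) :=
        Real.log_pos (by nlinarith)
      have hℓ0 : 0 < ℓ := div_pos hlogpos hAipos'
      have hℓle : ℓ ≤ δ * (1/2)^i := hlen i
      set z' : ℝ := z - ℓ with hz'
      have hpow_le : ((1:ℝ)/2)^i ≤ 1 := pow_le_one₀ (by norm_num) (by norm_num)
      have hpow_pos : (0:ℝ) < (1/2:ℝ)^i := by positivity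
      have hlen' : w - z' ≤ 2*δ*(1 - (1/2)^(i+1)) := by
        rw [hz']
        have : (1/2:ℝ)^(i+1) = (1/2:ℝ)^i * (1/2) := pow_succ _ _
        rw [this]
        linarith
      have hzb2 : b + 2*δ ≤ z' := by
        have h1 : w - z' ≤ 2*δ := by
          have : (0:ℝ) < (1/2:ℝ)^(i+1) := by positivity
          nlinarith [hlen']
        linarith [hwb ▸ h1]
      have hz'w : z' ≤ w := by
        rw [hz']
        linarith
      have hbz' : b ≤ z' := by linarith
      have hz'mem : z' ∈ Set.Icc α₀ α₁ := ⟨by linarith [hb.1], by linarith [hw.2]⟩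
      have hzmem : z ∈ Set.Icc α₀ α₁ := ⟨by linarith [hb.1], by linarith [hw.2]⟩
      have hz'z : z' ≤ z := by rw [hz']; linarith
      have hK1 : 1 ≤ K := le_trans (by omega) hKge
      -- decay estimates
      have hSz' : ∀ k : ℕ, K ≤ k → (∑ j ∈ Finset.range k, f j z') ≤ (k:ℝ) / Ai i := by
        intro k hk
        refine le_trans ?_ (hP k hk)
        exact Finset.sum_le_sum fun j _ => hmono j hz'mem hzmem hz'z
      have hcS : ∀ k : ℕ, K ≤ k → Ai i * (∑ j ∈ Finset.range k, f j z) ≤ (k:ℝ) := by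
        intro k hk
        have := hP k hk
        rw [mul_comm]
        calc (∑ j ∈ Finset.range k, f j z) * Ai i ≤ ((k:ℝ) / Ai i) * Ai i :=
              mul_le_mul_of_nonneg_right this hAipos'.le
          _ = k := by field_simp
      have hcS' : ∀ k : ℕ, K ≤ k → Ai i * (∑ j ∈ Finset.range k, f j z') ≤ (k:ℝ) := by
        intro k hk
        have := hSz' k hk
        rw [mul_comm]
        calc (∑ j ∈ Finset.range k, f j z') * Ai i ≤ ((k:ℝ) / Ai i) * Ai i :=
              mul_le_mul_of_nonneg_right this hAipos'.le
          _ = k := by field_simp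
      have decay1 : ∀ k : ℕ, K ≤ k → f k z' ≤ 1 / (2 * (Ai i)^2) := by
        intro k hk
        have hcore := core hderiv hmono hrange0 hf0 hineq (le_trans hK1 hk)
          hz'mem hzmem hz'z hAipos'.le (hcS k hk)
        have hexpv : Real.exp (Ai i * (z - z')) = 2 * M' * (Ai i)^2 := by
          have : Ai i * (z - z') = Real.log (2 * M' * (Ai i)^2) := by
            rw [hz']
            have : z - (z - ℓ) = ℓ := by ring
            rw [this, hℓ]
            field_simp
          rw [this, Real.exp_log (by positivity)]
        have h1 : f k z' * (2 * M' * (Ai i)^2) ≤ M' := by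
          rw [← hexpv]
          exact le_trans hcore (hrangeM k z hzmem)
        have h2 := (div_le_div_iff_of_pos_right (show (0:ℝ) < 2*M'*(Ai i)^2 by positivity)).2 h1
        calc f k z' = f k z' * (2*M'*(Ai i)^2) / (2*M'*(Ai i)^2) := by
              field_simp
          _ ≤ M' / (2*M'*(Ai i)^2) := h2
          _ = 1 / (2*(Ai i)^2) := by
              rw [div_eq_div_iff (by positivity) (by positivity)]
              ring
      have decay2 : ∀ k : ℕ, K ≤ k → f k b ≤ M' * Real.exp (-(2*δ*Ai i)) := by
        intro k hk
        have hcore := core hderiv hmono hrange0 hf0 hineq (le_trans hK1 hk)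
          hb hz'mem hbz' hAipos'.le (hcS' k hk)
        have h1 : f k b * Real.exp (Ai i * (z' - b)) ≤ M' :=
          le_trans hcore (hrangeM k z' hz'mem)
        have h2 : Real.exp (2*δ*Ai i) ≤ Real.exp (Ai i * (z' - b)) := by
          apply Real.exp_le_exp.2
          nlinarith [hzb2, hAipos']
        have h3 : f k b * Real.exp (2*δ*Ai i) ≤ M' := by
          refine le_trans ?_ h1
          exact mul_le_mul_of_nonneg_left h2 (hrange0 k b hb)
        have hE : (0:ℝ) < Real.exp (2*δ*Ai i) := Real.exp_pos _
        have h4 := (div_le_div_iff_of_pos_right hE).2 h3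
        calc f k b = f k b * Real.exp (2*δ*Ai i) / Real.exp (2*δ*Ai i) := by
              field_simp
          _ ≤ M' / Real.exp (2*δ*Ai i) := h4
          _ = M' * Real.exp (-(2*δ*Ai i)) := by
              rw [Real.exp_neg, div_eq_mul_inv]
      -- new threshold
      set y : ℝ := 2 * M' * (Ai i)^2 with hy
      have hy2 : (2:ℝ) ≤ y := by nlinarith [hAi4 i]
      have hy0 : (0:ℝ) ≤ y := by linarith
      set K' : ℕ := K * ⌈y⌉₊ with hK'def
      have hceil_ge : y ≤ (⌈y⌉₊:ℝ) := Nat.le_ceil y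
      have hceil_le : (⌈y⌉₊:ℝ) ≤ (3/2) * y := by
        have := Nat.ceil_lt_add_one hy0
        linarith
      have hceil2 : 2 ≤ ⌈y⌉₊ := by
        have h : (1:ℝ) < y := by linarith
        exact Nat.lt_ceil.2 (by exact_mod_cast h)
      have hKK' : K * 2 ≤ K' := Nat.mul_le_mul_left K hceil2
      have hK'ge : (i+1) + 1 ≤ K' := by omega
      have hKleK' : K ≤ K' := by omega
      have hK'R : (K':ℝ) = (K:ℝ) * (⌈y⌉₊:ℝ) := by rw [hK'def]; push_cast; ring
      have hKpos : (0:ℝ) ≤ (K:ℝ) := Nat.cast_nonneg K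
      have hK'lower : (K:ℝ) * y ≤ (K':ℝ) := by
        rw [hK'R]
        exact mul_le_mul_of_nonneg_left hceil_ge hKpos
      have hK'le : (K':ℝ) ≤ (K₀:ℝ) * (3*M')^(i+1) * (Ai (i+1))^2 := by
        rw [hK'R]
        have h1 : (K:ℝ) * (⌈y⌉₊:ℝ) ≤ (K:ℝ) * ((3/2)*y) :=
          mul_le_mul_of_nonneg_left hceil_le hKpos
        have h2 : (K:ℝ) * ((3/2)*y) = (K:ℝ) * (3*M'*(Ai i)^2) := by rw [hy]; ring
        have h3 : (K:ℝ) * (3*M'*(Ai i)^2) ≤ ((K₀:ℝ) * (3*M')^i * (Ai i)^2) * (3*M'*(Ai i)^2) :=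
          mul_le_mul_of_nonneg_right hKle (by positivity)
        have h4 : ((K₀:ℝ) * (3*M')^i * (Ai i)^2) * (3*M'*(Ai i)^2)
            = (K₀:ℝ) * (3*M')^(i+1) * (Ai (i+1))^2 := by
          rw [hAisq i, pow_succ]
          ring
        linarith
      have hP' : ∀ k : ℕ, K' ≤ k → (∑ j ∈ Finset.range k, f j z') ≤ (k:ℝ) / Ai (i+1) := by
        intro k hk
        have hKk : K ≤ k := le_trans hKleK' hk
        have hsplit : (∑ j ∈ Finset.range K, f j z') + (∑ j ∈ Finset.Ico K k, f j z')
            = ∑ j ∈ Finset.range k, f j z' := Finset.sum_range_add_sum_Ico _ hKk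
        have hb1 : (∑ j ∈ Finset.range K, f j z') ≤ (K:ℝ) * M' := by
          have := Finset.sum_le_card_nsmul (Finset.range K) (fun j => f j z') M'
            (fun j _ => hrangeM j z' hz'mem)
          simpa [Finset.card_range, nsmul_eq_mul] using this
        have hb2 : (∑ j ∈ Finset.Ico K k, f j z') ≤ (k:ℝ) * (1/(2*(Ai i)^2)) := by
          have h1 := Finset.sum_le_card_nsmul (Finset.Ico K k) (fun j => f j z')
            (1/(2*(Ai i)^2)) (fun j hj => decay1 j (Finset.mem_Ico.1 hj).1)
          have h2 : ((Finset.Ico K k).card : ℝ) ≤ (k:ℝ) := by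
            rw [Nat.card_Ico]
            exact_mod_cast Nat.sub_le k K
          calc (∑ j ∈ Finset.Ico K k, f j z')
              ≤ ((Finset.Ico K k).card : ℝ) * (1/(2*(Ai i)^2)) := by
                simpa [nsmul_eq_mul] using h1
            _ ≤ (k:ℝ) * (1/(2*(Ai i)^2)) := mul_le_mul_of_nonneg_right h2 (by positivity)
        have hkR : (K:ℝ) * y ≤ (k:ℝ) := by
          refine le_trans hK'lower ?_
          exact_mod_cast hk
        have hb3 : (K:ℝ) * M' ≤ (k:ℝ) / (2*(Ai i)^2) := by
          rw [le_div_iff₀ (by positivity)]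
          calc (K:ℝ) * M' * (2*(Ai i)^2) = (K:ℝ) * y := by rw [hy]; ring
            _ ≤ (k:ℝ) := hkR
        have e : (k:ℝ) * (1/(2*(Ai i)^2)) = (k:ℝ)/(2*(Ai i)^2) := by ring
        rw [e] at hb2
        have hfin : (∑ j ∈ Finset.range k, f j z')
            ≤ (k:ℝ)/(2*(Ai i)^2) + (k:ℝ)/(2*(Ai i)^2) := by
          rw [← hsplit]
          linarith
        calc (∑ j ∈ Finset.range k, f j z') ≤ (k:ℝ)/(2*(Ai i)^2) + (k:ℝ)/(2*(Ai i)^2) := hfin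
          _ = (k:ℝ) / (Ai i)^2 := by
              field_simp
              ring
          _ = (k:ℝ) / Ai (i+1) := by rw [hAisq i]
      have hSb' : (∑ j ∈ Finset.range K', f j b) ≤ M'*K₀ + 2*M'*K₀*(1 - (1/2)^(i+1)) := by
        have hsplit : (∑ j ∈ Finset.range K, f j b) + (∑ j ∈ Finset.Ico K K', f j b)
            = ∑ j ∈ Finset.range K', f j b := Finset.sum_range_add_sum_Ico _ hKleK'
        have hb2 : (∑ j ∈ Finset.Ico K K', f j b) ≤ (K':ℝ) * (M' * Real.exp (-(2*δ*Ai i))) := by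
          have h1 := Finset.sum_le_card_nsmul (Finset.Ico K K') (fun j => f j b)
            (M' * Real.exp (-(2*δ*Ai i))) (fun j hj => decay2 j (Finset.mem_Ico.1 hj).1)
          have h2 : ((Finset.Ico K K').card : ℝ) ≤ (K':ℝ) := by
            rw [Nat.card_Ico]
            exact_mod_cast Nat.sub_le K' K
          calc (∑ j ∈ Finset.Ico K K', f j b)
              ≤ ((Finset.Ico K K').card : ℝ) * (M' * Real.exp (-(2*δ*Ai i))) := by
                simpa [nsmul_eq_mul] using h1
            _ ≤ (K':ℝ) * (M' * Real.exp (-(2*δ*Ai i))) :=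
                mul_le_mul_of_nonneg_right h2 (by positivity)
        have hb3 : (K':ℝ) * Real.exp (-(2*δ*Ai i)) ≤ (K₀:ℝ) * (1/2)^i := by
          have h1 : (K':ℝ) * Real.exp (-(2*δ*Ai i))
              ≤ ((K₀:ℝ) * (3*M')^(i+1) * (Ai (i+1))^2) * Real.exp (-(2*δ*Ai i)) :=
            mul_le_mul_of_nonneg_right hK'le (Real.exp_nonneg _)
          have h2 : ((K₀:ℝ) * (3*M')^(i+1) * (Ai (i+1))^2) * Real.exp (-(2*δ*Ai i))
              = (K₀:ℝ) * ((3*M')^(i+1) * (Ai i)^4 * Real.exp (-(2*δ*Ai i))) := by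
            rw [hAisq i]
            ring
          have h3 := mul_le_mul_of_nonneg_left (hC2 i) (Nat.cast_nonneg K₀ : (0:ℝ) ≤ (K₀:ℝ))
          rw [h2] at h1
          linarith
        have hb4 : (∑ j ∈ Finset.Ico K K', f j b) ≤ M' * ((K₀:ℝ) * (1/2)^i) := by
          calc (∑ j ∈ Finset.Ico K K', f j b) ≤ (K':ℝ) * (M' * Real.exp (-(2*δ*Ai i))) := hb2
            _ = M' * ((K':ℝ) * Real.exp (-(2*δ*Ai i))) := by ring
            _ ≤ M' * ((K₀:ℝ) * (1/2)^i) := mul_le_mul_of_nonneg_left hb3 hM0.le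
        have harith : M'*(K₀:ℝ) + 2*M'*(K₀:ℝ)*(1 - (1/2)^i) + M' * ((K₀:ℝ) * (1/2)^i)
            = M'*(K₀:ℝ) + 2*M'*(K₀:ℝ)*(1 - (1/2)^(i+1)) := by
          rw [pow_succ]
          ring
        rw [← hsplit]
        linarith [hSb, hb4]
      exact ⟨z', K', hlen', hz'w, hK'ge, hK'le, hP', hSb'⟩
  refine ⟨M'*(K₀:ℝ) + 2*M'*(K₀:ℝ), fun n => ?_⟩
  obtain ⟨z, K, _h1, _h2, hKge, _h3, _h4, hSb⟩ := IND n
  have hnK : n ≤ K := by omega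
  have h1 : (∑ j ∈ Finset.range n, f j b) ≤ ∑ j ∈ Finset.range K, f j b :=
    Finset.sum_le_sum_of_subset_of_nonneg (Finset.range_subset_range.2 hnK)
      (fun j _ _ => hrange0 j b hb)
  have h2 : (0:ℝ) < (1/2:ℝ)^n := by positivity
  have h3 : 2*M'*(K₀:ℝ)*(1 - (1/2)^n) ≤ 2*M'*(K₀:ℝ) := by
    have h4 : (0:ℝ) ≤ 2*M'*(K₀:ℝ)*((1/2:ℝ)^n) := by positivity
    nlinarith [h4]
  linarith

end Stmt4Aux

/-- Supercritical step of the proof of Lemma 1.2: for `β' < β`,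
`f(β) - f(β') ≥ (β - β') · limsup_n (log Σ_n(β') / log n)`. -/
theorem stmt_4 (α₀ α₁ M : ℝ) (hα : α₀ < α₁) (hM : 0 < M)
    (f f' : ℕ → ℝ → ℝ) (F : ℝ → ℝ)
    (hderiv : ∀ n, ∀ x ∈ Set.Icc α₀ α₁,
      HasDerivWithinAt (f n) (f' n x) (Set.Icc α₀ α₁) x)
    (hmono : ∀ n, MonotoneOn (f n) (Set.Icc α₀ α₁))
    (hrange : ∀ n, ∀ x ∈ Set.Icc α₀ α₁, f n x ∈ Set.Icc 0 M)
    (hconv : ∀ x ∈ Set.Icc α₀ α₁,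
      Tendsto (fun n => f n x) atTop (nhds (F x)))
    (hf0 : ∀ x ∈ Set.Icc α₀ α₁, 0 < f 0 x)
    (hineq : ∀ n, 1 ≤ n → ∀ x ∈ Set.Icc α₀ α₁,
      f' n x ≥ ((n : ℝ) / (∑ k ∈ Finset.range n, f k x)) * f n x) :
    ∀ β' ∈ Set.Icc α₀ α₁, ∀ β ∈ Set.Icc α₀ α₁, β' < β →
      F β - F β' ≥ (β - β') *
        limsup (fun n : ℕ =>
          Real.log (∑ k ∈ Finset.range n, f k β') / Real.log n) atTop := by
  intro β' hβ' β hβ hlt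
  set M' : ℝ := max M 1 with hM'
  have hM1 : (1:ℝ) ≤ M' := le_max_right M 1
  have hM0 : (0:ℝ) < M' := by linarith
  have hrange0 : ∀ n, ∀ x ∈ Set.Icc α₀ α₁, 0 ≤ f n x := fun n x hx => (hrange n x hx).1
  have hrangeM : ∀ n, ∀ x ∈ Set.Icc α₀ α₁, f n x ≤ M' := fun n x hx =>
    le_trans (hrange n x hx).2 (le_max_left M 1)
  set u : ℕ → ℝ := fun n : ℕ =>
    Real.log (∑ k ∈ Finset.range n, f k β') / Real.log n with hu
  have hSpos : ∀ n : ℕ, 1 ≤ n → 0 < ∑ k ∈ Finset.range n, f k β' := by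
    intro n hn
    apply Finset.sum_pos' (fun k _ => hrange0 k β' hβ')
    exact ⟨0, Finset.mem_range.2 hn, hf0 β' hβ'⟩
  have hSle : ∀ n : ℕ, (∑ k ∈ Finset.range n, f k β') ≤ (n:ℝ) * M' := by
    intro n
    have := Finset.sum_le_card_nsmul (Finset.range n) (fun k => f k β') M'
      (fun k _ => hrangeM k β' hβ')
    simpa [Finset.card_range, nsmul_eq_mul] using this
  have hlog2 : (0:ℝ) < Real.log 2 := Real.log_pos (by norm_num)
  have hlogM0 : (0:ℝ) ≤ Real.log M' := Real.log_nonneg hM1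
  have hub : ∀ n : ℕ, 2 ≤ n → u n ≤ 1 + Real.log M' / Real.log n := by
    intro n hn
    have hn1 : (1:ℝ) < (n:ℝ) := by exact_mod_cast hn
    have hlogn : (0:ℝ) < Real.log n := Real.log_pos hn1
    have h1 : Real.log (∑ k ∈ Finset.range n, f k β') ≤ Real.log ((n:ℝ) * M') :=
      Real.log_le_log (hSpos n (by omega)) (hSle n)
    have h2 : Real.log ((n:ℝ) * M') = Real.log n + Real.log M' :=
      Real.log_mul (by positivity) hM0.ne'
    have h3 : u n ≤ (Real.log n + Real.log M') / Real.log n := by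
      rw [hu]
      exact (div_le_div_iff_of_pos_right hlogn).2 (h2 ▸ h1)
    have h4 : (Real.log n + Real.log M') / Real.log n = 1 + Real.log M' / Real.log n := by
      rw [add_div, div_self hlogn.ne']
    linarith [h3, h4.symm.le]
  have hubC : ∀ n : ℕ, u n ≤ 1 + Real.log M' / Real.log 2 := by
    intro n
    rcases Nat.lt_or_ge n 2 with h2 | h2
    · interval_cases n
      · simp only [hu, Finset.range_zero, Finset.sum_empty, Real.log_zero, zero_div]
        positivity
      · simp only [hu, Nat.cast_one, Real.log_one, div_zero]
        positivity
    · refine le_trans (hub n h2) ?_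
      have hle : Real.log 2 ≤ Real.log n := by
        apply Real.log_le_log (by norm_num)
        exact_mod_cast h2
      have := div_le_div_of_nonneg_left hlogM0 hlog2 hle
      linarith
  have hlb : ∀ n : ℕ, min 0 (Real.log (f 0 β') / Real.log 2) ≤ u n := by
    intro n
    have hmin0 : min 0 (Real.log (f 0 β') / Real.log 2) ≤ 0 := min_le_left _ _
    rcases Nat.lt_or_ge n 2 with h2 | h2
    · interval_cases n
      · simp only [hu, Finset.range_zero, Finset.sum_empty, Real.log_zero, zero_div]
        exact hmin0
      · simp only [hu, Nat.cast_one, Real.log_one, div_zero]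
        exact hmin0
    · have hn1 : (1:ℝ) < (n:ℝ) := by exact_mod_cast h2
      have hlogn : (0:ℝ) < Real.log n := Real.log_pos hn1
      have hlogle : Real.log 2 ≤ Real.log n := by
        apply Real.log_le_log (by norm_num)
        exact_mod_cast h2
      have hf0S : f 0 β' ≤ ∑ k ∈ Finset.range n, f k β' :=
        Finset.single_le_sum (fun k _ => hrange0 k β' hβ')
          (Finset.mem_range.2 (by omega))
      have hf0pos := hf0 β' hβ'
      rcases le_or_gt 0 (Real.log (∑ k ∈ Finset.range n, f k β')) with hsgn | hsgn
      · have h9 : 0 ≤ u n := div_nonneg hsgn hlogn.le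
        linarith
      · have h1 : Real.log (f 0 β') ≤ Real.log (∑ k ∈ Finset.range n, f k β') :=
          Real.log_le_log hf0pos hf0S
        have hinv : (Real.log n)⁻¹ ≤ (Real.log 2)⁻¹ := inv_anti₀ hlog2 hlogle
        have h2' : Real.log (∑ k ∈ Finset.range n, f k β') / Real.log 2
            ≤ Real.log (∑ k ∈ Finset.range n, f k β') / Real.log n := by
          rw [div_eq_mul_inv, div_eq_mul_inv]
          exact mul_le_mul_of_nonpos_left hinv hsgn.le
        have h3 : Real.log (f 0 β') / Real.log 2
            ≤ Real.log (∑ k ∈ Finset.range n, f k β') / Real.log 2 :=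
          (div_le_div_iff_of_pos_right hlog2).2 h1
        have h4 := min_le_right 0 (Real.log (f 0 β') / Real.log 2)
        have h5 : u n = Real.log (∑ k ∈ Finset.range n, f k β') / Real.log n := rfl
        linarith
  have hcob : IsCoboundedUnder (· ≤ ·) atTop u :=
    IsBoundedUnder.isCoboundedUnder_le
      (isBoundedUnder_of ⟨min 0 (Real.log (f 0 β') / Real.log 2), hlb⟩)
  have hFmono : F β' ≤ F β :=
    le_of_tendsto_of_tendsto' (hconv β' hβ') (hconv β hβ) (fun n => hmono n hβ' hβ hlt.le)
  rw [ge_iff_le]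
  by_cases hex : ∃ x, x ∈ Set.Icc α₀ α₁ ∧ β' < x ∧ x ≤ β ∧ F x = 0
  · obtain ⟨xb, hxbm, hxb1, hxb2, hFxb⟩ := hex
    have hzero : Tendsto (fun k => f k xb) atTop (nhds 0) := by
      have := hconv xb hxbm
      rwa [hFxb] at this
    obtain ⟨B, hB⟩ := Stmt4Aux.lemA hM hderiv hmono hrange hf0 hineq hβ' hxbm hxb1 hzero
    set B' : ℝ := max B 1 with hB'
    have hB1 : (1:ℝ) ≤ B' := le_max_right B 1
    have hv : Tendsto (fun n : ℕ => Real.log B' / Real.log n) atTop (nhds 0) :=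
      Tendsto.div_atTop tendsto_const_nhds
        (Real.tendsto_log_atTop.comp tendsto_natCast_atTop_atTop)
    have hev : ∀ᶠ n : ℕ in atTop, u n ≤ Real.log B' / Real.log n := by
      filter_upwards [eventually_ge_atTop 2] with n hn
      have hS := hSpos n (by omega)
      have hn1 : (1:ℝ) < (n:ℝ) := by exact_mod_cast hn
      have hlogn : (0:ℝ) < Real.log n := Real.log_pos hn1
      exact (div_le_div_iff_of_pos_right hlogn).2
        (Real.log_le_log hS (le_trans (hB n) (le_max_left B 1)))
    have hL0 : limsup u atTop ≤ 0 := by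
      calc limsup u atTop ≤ limsup (fun n : ℕ => Real.log B' / Real.log n) atTop :=
            limsup_le_limsup hev hcob hv.isBoundedUnder_le
        _ = 0 := hv.limsup_eq
    have h5 := mul_le_mul_of_nonneg_left hL0 (by linarith : (0:ℝ) ≤ β - β')
    rw [mul_zero] at h5
    linarith
  · push_neg at hex
    have hFpos : ∀ x, x ∈ Set.Icc α₀ α₁ → β' < x → x ≤ β → 0 < F x := by
      intro x hx h1 h2
      have hne := hex x hx h1 h2
      have hge : 0 ≤ F x := ge_of_tendsto' (hconv x hx) (fun n => hrange0 n x hx)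
      exact lt_of_le_of_ne hge (Ne.symm hne)
    have hD : β - β' ≤ F β - F β' := by
      by_contra hcon
      push_neg at hcon
      set ε : ℝ := (β - β') - (F β - F β') with hε
      have hε0 : 0 < ε := by linarith
      set x : ℝ := β' + min (ε/2) ((β - β')/2) with hx
      have hmin0 : 0 < min (ε/2) ((β-β')/2) := lt_min (by linarith) (by linarith)
      have hx1 : β' < x := by rw [hx]; linarith
      have hx2 : x < β := by
        have h6 := min_le_right (ε/2) ((β-β')/2)
        rw [hx]
        linarith
      have hxm : x ∈ Set.Icc α₀ α₁ := ⟨le_trans hβ'.1 hx1.le, le_trans hx2.le hβ.2⟩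
      have hpos := hFpos x hxm hx1 hx2.le
      have hstep := Stmt4Aux.posCase (M := M) hderiv hmono hrange0 hconv hf0 hineq hxm hβ hx2 hpos
      have hFx : F β' ≤ F x :=
        le_of_tendsto_of_tendsto' (hconv β' hβ') (hconv x hxm)
          (fun n => hmono n hβ' hxm hx1.le)
      have hminle : min (ε/2) ((β-β')/2) ≤ ε/2 := min_le_left _ _
      rw [hx] at hstep
      linarith
    have hv1 : Tendsto (fun n : ℕ => 1 + Real.log M' / Real.log n) atTop (nhds 1) := by
      have h0 : Tendsto (fun n : ℕ => Real.log M' / Real.log n) atTop (nhds 0) :=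
        Tendsto.div_atTop tendsto_const_nhds
          (Real.tendsto_log_atTop.comp tendsto_natCast_atTop_atTop)
      have h7 := (tendsto_const_nhds (x := (1:ℝ)) (f := atTop (α := ℕ))).add h0
      simpa using h7
    have hL1 : limsup u atTop ≤ 1 := by
      have hev : ∀ᶠ n : ℕ in atTop, u n ≤ 1 + Real.log M' / Real.log n := by
        filter_upwards [eventually_ge_atTop 2] with n hn
        exact hub n hn
      calc limsup u atTop ≤ limsup (fun n : ℕ => 1 + Real.log M' / Real.log n) atTop :=
            limsup_le_limsup hev hcob hv1.isBoundedUnder_le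
        _ = 1 := hv1.limsup_eq
    have h8 := mul_le_mul_of_nonneg_left hL1 (by linarith : (0:ℝ) ≤ β - β')
    rw [mul_one] at h8
    linarith
end

section
/- Let α₀ < α₁ be real numbers and M > 0. Let (f_n)_{n≥0} be a sequence of differentiable, nondecreasing functions f_n : [α₀, α₁] → [0, M] with f_0(x) > 0 for all x, and set Σ_n := Σ_{k=0}^{n-1} f_k. Assume f_n'(x) ≥ (n / Σ_n(x)) · f_n(x) for all n ≥ 1 and x ∈ [α₀, α₁]. For n ≥ 2 define T_n(x) := (1/log n) · Σ_{i=1}^{n} f_i(x)/i. Then T_n is differentiable and for every x ∈ [α₀, α₁], T_n'(x) ≥ (log Σ_{n+1}(x) − log Σ_1(x)) / log n. -/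
open Filter Real

private lemma stmt7_tel (g : ℕ → ℝ) (n : ℕ) :
    ∑ i ∈ Finset.Icc 1 n, (g (i+1) - g i) = g (n+1) - g 1 := by
  induction n with
  | zero => simp
  | succ m ih =>
    rw [Finset.sum_Icc_succ_top (by omega : 1 ≤ m+1), ih]
    ring

/-- Differential inequality for `T_n(x) = (1/log n) ∑_{i=1}^n f_i(x)/i`:
`T_n` is differentiable with `T_n'(x) ≥ (log Σ_{n+1}(x) - log Σ_1(x)) / log n`. -/
theorem stmt_7 (α₀ α₁ M : ℝ) (hα : α₀ < α₁) (hM : 0 < M)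
    (f f' : ℕ → ℝ → ℝ)
    (hderiv : ∀ n, ∀ x ∈ Set.Icc α₀ α₁,
      HasDerivWithinAt (f n) (f' n x) (Set.Icc α₀ α₁) x)
    (hmono : ∀ n, MonotoneOn (f n) (Set.Icc α₀ α₁))
    (hrange : ∀ n, ∀ x ∈ Set.Icc α₀ α₁, f n x ∈ Set.Icc 0 M)
    (hf0 : ∀ x ∈ Set.Icc α₀ α₁, 0 < f 0 x)
    (hineq : ∀ n, 1 ≤ n → ∀ x ∈ Set.Icc α₀ α₁,
      f' n x ≥ ((n : ℝ) / (∑ k ∈ Finset.range n, f k x)) * f n x) :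
    ∀ n : ℕ, 2 ≤ n → ∀ x ∈ Set.Icc α₀ α₁,
      HasDerivWithinAt
        (fun y => (1 / Real.log n) * ∑ i ∈ Finset.Icc 1 n, f i y / i)
        ((1 / Real.log n) * ∑ i ∈ Finset.Icc 1 n, f' i x / i)
        (Set.Icc α₀ α₁) x ∧
      (1 / Real.log n) * ∑ i ∈ Finset.Icc 1 n, f' i x / i ≥
        (Real.log (∑ k ∈ Finset.range (n + 1), f k x) -
          Real.log (∑ k ∈ Finset.range 1, f k x)) / Real.log n := by
  intro n hn x hx
  have hlog : 0 < Real.log n := by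
    apply Real.log_pos
    exact_mod_cast (by omega : (1:ℕ) < n)
  constructor
  · exact ((HasDerivWithinAt.fun_sum fun i _ => (hderiv i x hx).div_const i)).const_mul _
  · -- set up partial sums
    set S : ℕ → ℝ := fun k => ∑ j ∈ Finset.range k, f j x with hS
    have hSpos : ∀ k, 1 ≤ k → 0 < S k := by
      intro k hk
      apply Finset.sum_pos'
      · intro j _; exact (hrange j x hx).1
      · exact ⟨0, Finset.mem_range.mpr (by omega), hf0 x hx⟩
    have key : ∀ i ∈ Finset.Icc 1 n,
        Real.log (S (i+1)) - Real.log (S i) ≤ f' i x / i := by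
      intro i hi
      have hi1 : 1 ≤ i := (Finset.mem_Icc.mp hi).1
      have hSi := hSpos i hi1
      have hSi1 := hSpos (i+1) (by omega)
      have hstep : S (i+1) = S i + f i x := Finset.sum_range_succ _ _
      have h1 : Real.log (S (i+1)) - Real.log (S i) = Real.log (S (i+1) / S i) :=
        (Real.log_div hSi1.ne' hSi.ne').symm
      have h2 : Real.log (S (i+1) / S i) ≤ S (i+1) / S i - 1 :=
        Real.log_le_sub_one_of_pos (by positivity)
      have h3 : S (i+1) / S i - 1 = f i x / S i := by
        rw [hstep]; field_simp; ring
      have h4 : f i x / S i ≤ f' i x / i := by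
        have hipos : (0:ℝ) < i := by exact_mod_cast hi1
        have h := hineq i hi1 x hx
        have hSeq : S i = ∑ k ∈ Finset.range i, f k x := rfl
        rw [ge_iff_le, div_mul_eq_mul_div, mul_comm, ← hSeq,
          div_le_iff₀ hSi] at h
        rw [div_le_div_iff₀ hSi hipos]
        linarith
      linarith [h1, h2, h3, h4]
    have hsum : Real.log (S (n+1)) - Real.log (S 1) ≤
        ∑ i ∈ Finset.Icc 1 n, f' i x / i := by
      have htel := stmt7_tel (fun k => Real.log (S k)) n
      calc Real.log (S (n+1)) - Real.log (S 1)
          = ∑ i ∈ Finset.Icc 1 n, (Real.log (S (i+1)) - Real.log (S i)) := htel.symm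
        _ ≤ ∑ i ∈ Finset.Icc 1 n, f' i x / i := Finset.sum_le_sum key
    rw [ge_iff_le, div_le_iff₀ hlog]
    calc Real.log (S (n+1)) - Real.log (S 1)
        ≤ ∑ i ∈ Finset.Icc 1 n, f' i x / i := hsum
      _ = 1 / Real.log n * (∑ i ∈ Finset.Icc 1 n, f' i x / i) * Real.log n := by
          field_simp
end

section
/- Let α₀ < α₁ be real numbers and M > 0. Let (f_n)_{n≥0} be a sequence of differentiable, nondecreasing functions f_n : [α₀, α₁] → [0, M] with f_0(x) > 0 for all x, and set Σ_n := Σ_{k=0}^{n-1} f_k. Assume f_n'(x) ≥ (n / Σ_n(x)) · f_n(x) for all n ≥ 1 and x ∈ [α₀, α₁]. For n ≥ 2 define T_n(x) := (1/log n) · Σ_{i=1}^{n} f_i(x)/i. Then for all β', β ∈ [α₀, α₁] with β' < β and all n ≥ 2, T_n(β) − T_n(β') ≥ (β − β') · (log Σ_n(β') − log M) / log n. -/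
open Filter Real

/-- Integrated differential inequality for `T_n`: for `β' < β` and `n ≥ 2`,
`T_n(β) - T_n(β') ≥ (β - β') (log Σ_n(β') - log M) / log n`. -/
theorem stmt_8 (α₀ α₁ M : ℝ) (hα : α₀ < α₁) (hM : 0 < M)
    (f f' : ℕ → ℝ → ℝ)
    (hderiv : ∀ n, ∀ x ∈ Set.Icc α₀ α₁,
      HasDerivWithinAt (f n) (f' n x) (Set.Icc α₀ α₁) x)
    (hmono : ∀ n, MonotoneOn (f n) (Set.Icc α₀ α₁))
    (hrange : ∀ n, ∀ x ∈ Set.Icc α₀ α₁, f n x ∈ Set.Icc 0 M)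
    (hf0 : ∀ x ∈ Set.Icc α₀ α₁, 0 < f 0 x)
    (hineq : ∀ n, 1 ≤ n → ∀ x ∈ Set.Icc α₀ α₁,
      f' n x ≥ ((n : ℝ) / (∑ k ∈ Finset.range n, f k x)) * f n x) :
    ∀ β' ∈ Set.Icc α₀ α₁, ∀ β ∈ Set.Icc α₀ α₁, β' < β → ∀ n : ℕ, 2 ≤ n →
      (1 / Real.log n) * ∑ i ∈ Finset.Icc 1 n, f i β / i -
        (1 / Real.log n) * ∑ i ∈ Finset.Icc 1 n, f i β' / i ≥
      (β - β') * (Real.log (∑ k ∈ Finset.range n, f k β') - Real.log M) /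
        Real.log n := by
  intro β' hβ' β hβ hlt n hn
  have hsub : Set.Icc β' β ⊆ Set.Icc α₀ α₁ := Set.Icc_subset_Icc hβ'.1 hβ.2
  have hlogn : 0 < Real.log n := Real.log_pos (by exact_mod_cast hn)
  set C : ℝ := Real.log (∑ k ∈ Finset.range n, f k β') - Real.log M with hCdef
  set g : ℝ → ℝ := fun x => ∑ i ∈ Finset.Icc 1 n, f i x / i with hgdef
  -- positivity of partial sums
  have hSpos : ∀ i : ℕ, 1 ≤ i → ∀ x ∈ Set.Icc α₀ α₁,
      0 < ∑ k ∈ Finset.range i, f k x := by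
    intro i hi x hx
    have h0 : 0 < f 0 x := hf0 x hx
    have hle : f 0 x ≤ ∑ k ∈ Finset.range i, f k x :=
      Finset.single_le_sum (f := fun k => f k x) (fun k _ => (hrange k x hx).1)
        (Finset.mem_range.mpr hi)
    linarith
  -- monotone partial sums in x
  have hSmono : ∀ i : ℕ, MonotoneOn (fun x => ∑ k ∈ Finset.range i, f k x)
      (Set.Icc α₀ α₁) := by
    intro i x hx y hy hxy
    exact Finset.sum_le_sum fun k _ => hmono k hx hy hxy
  -- key derivative lower bound
  have hkey : ∀ x ∈ Set.Icc β' β, C ≤ ∑ i ∈ Finset.Icc 1 n, f' i x / i := by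
    intro x hx
    have hx' : x ∈ Set.Icc α₀ α₁ := hsub hx
    set S : ℕ → ℝ := fun i => ∑ k ∈ Finset.range i, f k x with hSdef
    have hterm : ∀ i ∈ Finset.Icc 1 n,
        Real.log (S (i + 1)) - Real.log (S i) ≤ f' i x / i := by
      intro i hi
      have hi1 : 1 ≤ i := (Finset.mem_Icc.mp hi).1
      have hSi : 0 < S i := hSpos i hi1 x hx'
      have hSi1 : 0 < S (i + 1) := hSpos (i + 1) (by omega) x hx'
      have hfi : 0 ≤ f i x := (hrange i x hx').1
      have hSsucc : S (i + 1) = S i + f i x := Finset.sum_range_succ _ _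
      have hip : (0 : ℝ) < i := by exact_mod_cast hi1
      have h1 : Real.log (S (i + 1)) - Real.log (S i) ≤ f i x / S i := by
        rw [← Real.log_div hSi1.ne' hSi.ne']
        have := Real.log_le_sub_one_of_pos (div_pos hSi1 hSi)
        calc Real.log (S (i + 1) / S i) ≤ S (i + 1) / S i - 1 := this
          _ = f i x / S i := by rw [hSsucc]; field_simp; ring
      have h2 : f i x / S i ≤ f' i x / i := by
        have h3 : ((i : ℝ) / S i) * f i x ≤ f' i x := hineq i hi1 x hx'
        have h4 : f i x / S i = ((i : ℝ) / S i) * f i x / i := by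
          field_simp
        rw [h4]
        gcongr
      linarith
    have hsum : ∑ i ∈ Finset.Icc 1 n, (Real.log (S (i + 1)) - Real.log (S i))
        ≤ ∑ i ∈ Finset.Icc 1 n, f' i x / i := Finset.sum_le_sum hterm
    -- telescope
    have htel : ∑ i ∈ Finset.Icc 1 n, (Real.log (S (i + 1)) - Real.log (S i))
        = Real.log (S (n + 1)) - Real.log (S 1) := by
      rw [← Finset.Ico_add_one_right_eq_Icc, Finset.sum_Ico_eq_sum_range]
      have := Finset.sum_range_sub (fun j => Real.log (S (j + 1))) n
      simpa [add_comm, add_left_comm, add_assoc] using this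
    -- bounds on endpoints
    have hS1 : S 1 = f 0 x := by simp [hSdef]
    have hlogS1 : Real.log (S 1) ≤ Real.log M := by
      rw [hS1]
      exact Real.log_le_log (hf0 x hx') (hrange 0 x hx').2
    have hSn : S n ≤ S (n + 1) := by
      simp only [hSdef, Finset.sum_range_succ]
      linarith [(hrange n x hx').1]
    have hSβ' : (∑ k ∈ Finset.range n, f k β') ≤ S n :=
      hSmono n (hsub (Set.left_mem_Icc.mpr hlt.le)) hx' hx.1
    have hlogSn : Real.log (∑ k ∈ Finset.range n, f k β') ≤ Real.log (S (n + 1)) :=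
      Real.log_le_log (hSpos n (by omega) β' hβ') (hSβ'.trans hSn)
    calc C = Real.log (∑ k ∈ Finset.range n, f k β') - Real.log M := hCdef
      _ ≤ Real.log (S (n + 1)) - Real.log (S 1) := by linarith
      _ ≤ ∑ i ∈ Finset.Icc 1 n, f' i x / i := htel ▸ hsum
  -- g is continuous on [α₀, α₁]
  have hgcont : ContinuousOn g (Set.Icc α₀ α₁) := by
    apply continuousOn_finset_sum
    intro i _
    exact ContinuousOn.div_const
      (fun x hx => (hderiv i x hx).continuousWithinAt) _
  -- h := g - C • id is monotone on [β', β]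
  have hmonoh : MonotoneOn (fun x => g x - C * x) (Set.Icc β' β) := by
    apply monotoneOn_of_hasDerivWithinAt_nonneg (f' := fun x =>
      (∑ i ∈ Finset.Icc 1 n, f' i x / i) - C) (convex_Icc β' β)
    · exact (hgcont.mono hsub).sub ((continuous_const.mul continuous_id).continuousOn)
    · intro x hx
      rw [interior_Icc]
      rw [interior_Icc] at hx
      have hx2 : x ∈ Set.Icc β' β := Set.Ioo_subset_Icc_self hx
      have hgd : HasDerivWithinAt g (∑ i ∈ Finset.Icc 1 n, f' i x / i)
          (Set.Ioo β' β) x := by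
        apply HasDerivWithinAt.fun_sum
        intro i _
        exact ((hderiv i x (hsub hx2)).div_const _).mono
          ((Set.Ioo_subset_Icc_self).trans hsub)
      have hcx : HasDerivWithinAt (fun y => C * y) C (Set.Ioo β' β) x := by
        simpa using (hasDerivWithinAt_id x (Set.Ioo β' β)).const_mul C
      exact hgd.sub hcx
    · intro x hx
      rw [interior_Icc] at hx
      have := hkey x (Set.Ioo_subset_Icc_self hx)
      linarith
  have hgineq : C * (β - β') ≤ g β - g β' := by
    have := hmonoh (Set.left_mem_Icc.mpr hlt.le) (Set.right_mem_Icc.mpr hlt.le) hlt.le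
    dsimp only at this
    nlinarith [this]
  have : (β - β') * C / Real.log n ≤ (g β - g β') / Real.log n := by
    gcongr
    linarith
  calc (β - β') * C / Real.log n ≤ (g β - g β') / Real.log n := this
    _ = (1 / Real.log n) * g β - (1 / Real.log n) * g β' := by ring
end

section
/- Let L be a finite distributive lattice and let μ : L → ℝ≥0 be a probability weight (Σ_{a∈L} μ(a) = 1) satisfying the FKG lattice condition μ(a)·μ(b) ≤ μ(a ⊔ b)·μ(a ⊓ b) for all a, b ∈ L. Let A₁, …, A_k ⊆ L be upper sets such that μ(A₁) = μ(A₂) = ⋯ = μ(A_k), where μ(A) := Σ_{a∈A} μ(a). Then μ(A₁) ≥ 1 − (1 − μ(A₁ ∪ ⋯ ∪ A_k))^{1/k}. -/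
open Real Finset

section Aux
variable {L : Type*} [DistribLattice L] [Fintype L] [DecidableEq L]

private lemma ind_sum (μ : L → ℝ) (B : Finset L) :
    ∑ a, μ a * (if a ∈ B then (1:ℝ) else 0) = ∑ a ∈ B, μ a := by
  simp [mul_ite, Finset.sum_ite, Finset.filter_mem_eq_inter]

/-- Harris inequality for lower sets. -/
private lemma harris_lower (μ : L → ℝ) (hμ0 : ∀ a, 0 ≤ μ a) (hsum : ∑ a, μ a = 1)
    (hFKG : ∀ a b, μ a * μ b ≤ μ (a ⊔ b) * μ (a ⊓ b))
    (B C : Finset L)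
    (hB : ∀ a ∈ B, ∀ b, b ≤ a → b ∈ B) (hC : ∀ a ∈ C, ∀ b, b ≤ a → b ∈ C) :
    (∑ a ∈ B, μ a) * (∑ a ∈ C, μ a) ≤ ∑ a ∈ B ∩ C, μ a := by
  classical
  set f : L → ℝ := fun a => if a ∈ B then 1 else 0 with hf
  set g : L → ℝ := fun a => if a ∈ C then 1 else 0 with hg
  have key := fkg (α := Lᵒᵈ) (μ := fun a : Lᵒᵈ => μ (OrderDual.ofDual a))
    (f := fun a : Lᵒᵈ => f (OrderDual.ofDual a)) (g := fun a : Lᵒᵈ => g (OrderDual.ofDual a))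
    (fun a => hμ0 _) (fun a => by dsimp only [f]; split <;> norm_num)
    (fun a => by dsimp only [g]; split <;> norm_num)
    (fun a b hab => by
      dsimp only [f]
      have hba : OrderDual.ofDual b ≤ OrderDual.ofDual a := hab
      split_ifs with h1 h2 h2
      · exact le_refl 1
      · exact absurd (hB _ h1 _ hba) h2
      · norm_num
      · exact le_refl 0)
    (fun a b hab => by
      dsimp only [g]
      have hba : OrderDual.ofDual b ≤ OrderDual.ofDual a := hab
      split_ifs with h1 h2 h2
      · exact le_refl 1
      · exact absurd (hC _ h1 _ hba) h2
      · norm_num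
      · exact le_refl 0)
    (fun a b => by
      have := hFKG (OrderDual.ofDual a) (OrderDual.ofDual b)
      simpa [mul_comm] using this)
  have hdual : ∀ F : L → ℝ, ∑ a : Lᵒᵈ, F (OrderDual.ofDual a) = ∑ a : L, F a := fun F =>
    Fintype.sum_equiv OrderDual.ofDual _ _ (fun _ => rfl)
  rw [hdual (fun a => μ a * f a), hdual (fun a => μ a * g a), hdual μ,
    hdual (fun a => μ a * (f a * g a))] at key
  have hfg : ∀ a, μ a * (f a * g a) = μ a * (if a ∈ B ∩ C then (1:ℝ) else 0) := by
    intro a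
    simp only [f, g, Finset.mem_inter]
    by_cases h1 : a ∈ B <;> by_cases h2 : a ∈ C <;> simp [h1, h2]
  calc (∑ a ∈ B, μ a) * (∑ a ∈ C, μ a)
      = (∑ a, μ a * f a) * (∑ a, μ a * g a) := by rw [ind_sum μ B, ind_sum μ C]
    _ ≤ (∑ a, μ a) * ∑ a, μ a * (f a * g a) := key
    _ = ∑ a ∈ B ∩ C, μ a := by
        rw [hsum, one_mul]
        rw [Finset.sum_congr rfl (fun a _ => hfg a), ind_sum μ (B ∩ C)]
end Aux

/-- Square-root trick: for an FKG probability weight on a finite distributive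
lattice and upper sets `A₁, …, A_k` of equal probability,
`μ(A₁) ≥ 1 - (1 - μ(A₁ ∪ ⋯ ∪ A_k))^{1/k}`. -/
theorem stmt_9 (L : Type*) [DistribLattice L] [Fintype L] [DecidableEq L]
    (μ : L → ℝ) (hμ0 : ∀ a, 0 ≤ μ a) (hsum : ∑ a, μ a = 1)
    (hFKG : ∀ a b, μ a * μ b ≤ μ (a ⊔ b) * μ (a ⊓ b))
    (k : ℕ) (hk : 1 ≤ k) (A : Fin k → Finset L)
    (hup : ∀ i, ∀ a ∈ A i, ∀ b, a ≤ b → b ∈ A i)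
    (heq : ∀ i j, ∑ a ∈ A i, μ a = ∑ a ∈ A j, μ a) :
    ∑ a ∈ A ⟨0, hk⟩, μ a ≥
      1 - (1 - ∑ a ∈ Finset.univ.biUnion A, μ a) ^ ((1 : ℝ) / k) := by
  classical
  set i0 : Fin k := ⟨0, hk⟩
  set x : ℝ := 1 - ∑ a ∈ A i0, μ a with hx
  -- complements
  set B : Fin k → Finset L := fun i => (A i)ᶜ with hBdef
  have hBlow : ∀ i, ∀ a ∈ B i, ∀ b, b ≤ a → b ∈ B i := by
    intro i a ha b hba
    simp only [B, Finset.mem_compl] at ha ⊢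
    exact fun hb => ha (hup i b hb a hba)
  have hcomplsum : ∀ S : Finset L, ∑ a ∈ Sᶜ, μ a = 1 - ∑ a ∈ S, μ a := by
    intro S
    have : ∑ a ∈ S, μ a + ∑ a ∈ Sᶜ, μ a = 1 := by
      rw [← hsum, ← Finset.sum_add_sum_compl S μ]
    linarith
  have hBeq : ∀ i, ∑ a ∈ B i, μ a = x := by
    intro i
    rw [hcomplsum, hx, heq i i0]
  -- product over subsets of indices
  have hmain : ∀ s : Finset (Fin k),
      x ^ s.card ≤ ∑ a ∈ s.inf (fun i => B i), μ a := by
    intro s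
    induction s using Finset.induction with
    | empty => simp [hsum]
    | @insert i s hi ih =>
      rw [Finset.inf_insert, Finset.card_insert_of_notMem hi, pow_succ]
      have hlowinf : ∀ a ∈ s.inf (fun i => B i), ∀ b, b ≤ a → b ∈ s.inf (fun i => B i) := by
        intro a ha b hba
        simp only [Finset.mem_inf] at ha ⊢
        exact fun j hj => hBlow j a (ha j hj) b hba
      calc x ^ s.card * x ≤ (∑ a ∈ s.inf (fun i => B i), μ a) * x := by
            apply mul_le_mul_of_nonneg_right ih
            rw [← hBeq i0]
            exact Finset.sum_nonneg fun a _ => hμ0 a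
        _ = (∑ a ∈ B i, μ a) * (∑ a ∈ s.inf (fun i => B i), μ a) := by
            rw [hBeq i, mul_comm]
        _ ≤ ∑ a ∈ B i ∩ s.inf (fun j => B j), μ a :=
            harris_lower μ hμ0 hsum hFKG _ _ (hBlow i) hlowinf
        _ = ∑ a ∈ (B i) ⊓ s.inf (fun j => B j), μ a := rfl
  have hinf : (Finset.univ : Finset (Fin k)).inf (fun i => B i) = (Finset.univ.biUnion A)ᶜ := by
    ext a
    simp [B, Finset.mem_inf]
  have hkey : x ^ k ≤ 1 - ∑ a ∈ Finset.univ.biUnion A, μ a := by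
    have := hmain Finset.univ
    rwa [hinf, Finset.card_univ, Fintype.card_fin, hcomplsum] at this
  -- nonnegativity
  have hx0 : 0 ≤ x := by rw [← hBeq i0]; exact Finset.sum_nonneg fun a _ => hμ0 a
  have hy0 : (0:ℝ) ≤ 1 - ∑ a ∈ Finset.univ.biUnion A, μ a :=
    le_trans (pow_nonneg hx0 k) hkey
  have hkne : (k:ℝ) ≠ 0 := Nat.cast_ne_zero.mpr (by omega)
  have hxle : x ≤ (1 - ∑ a ∈ Finset.univ.biUnion A, μ a) ^ ((1:ℝ)/k) := by
    have h1 : x = (x ^ k) ^ ((1:ℝ)/k) := by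
      rw [← Real.rpow_natCast x k, ← Real.rpow_mul hx0]
      rw [mul_one_div, div_self hkne, Real.rpow_one]
    rw [h1]
    exact Real.rpow_le_rpow (pow_nonneg hx0 k) hkey (by positivity)
  linarith [hxle]
end

section
/- Let L be a finite distributive lattice and let μ : L → ℝ≥0 be a probability weight (Σ_{a∈L} μ(a) = 1) satisfying the FKG lattice condition μ(a)·μ(b) ≤ μ(a ⊔ b)·μ(a ⊓ b) for all a, b ∈ L. If A ⊆ L is an upper set and B ⊆ L is a lower set, then μ(A ∩ B) ≤ μ(A)·μ(B). -/
open Real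

/-- FKG inequality (negative correlation form): for an FKG probability weight
on a finite distributive lattice, an upper set `A` and a lower set `B`,
`μ(A ∩ B) ≤ μ(A) μ(B)`. -/
theorem stmt_10 (L : Type*) [DistribLattice L] [Fintype L] [DecidableEq L]
    (μ : L → ℝ) (hμ0 : ∀ a, 0 ≤ μ a) (hsum : ∑ a, μ a = 1)
    (hFKG : ∀ a b, μ a * μ b ≤ μ (a ⊔ b) * μ (a ⊓ b))
    (A B : Finset L)
    (hA : ∀ a ∈ A, ∀ b, a ≤ b → b ∈ A)
    (hB : ∀ b ∈ B, ∀ a, a ≤ b → a ∈ B) :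
    ∑ x ∈ A ∩ B, μ x ≤ (∑ x ∈ A, μ x) * (∑ x ∈ B, μ x) := by
  classical
  set f : L → ℝ := fun a => if a ∈ A then 1 else 0 with hf
  set g : L → ℝ := fun a => if a ∈ B then 0 else 1 with hg
  have hf0 : (0 : L → ℝ) ≤ f := fun a => by
    simp only [Pi.zero_apply]; dsimp [f]; positivity
  have hg0 : (0 : L → ℝ) ≤ g := fun a => by
    simp only [Pi.zero_apply]; dsimp [g]; positivity
  have hfmono : Monotone f := by
    intro a b hab
    dsimp [f]
    by_cases h : a ∈ A
    · simp [h, hA a h b hab]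
    · simp [h]; positivity
  have hgmono : Monotone g := by
    intro a b hab
    dsimp [g]
    by_cases h : b ∈ B
    · simp [h, hB b h a hab]
    · simp [h]; split <;> norm_num
  have key := fkg f g μ (fun a => hμ0 a) hf0 hg0 hfmono hgmono
    (fun a b => by rw [mul_comm (μ (a ⊓ b))]; exact hFKG a b)
  have h1 : ∑ a, μ a * f a = ∑ x ∈ A, μ x := by
    simp [f, mul_ite, mul_one, mul_zero, Finset.sum_ite_mem, Finset.univ_inter]
  have h2 : ∑ a, μ a * g a = 1 - ∑ x ∈ B, μ x := by
    have : ∀ a, μ a * g a = μ a - (if a ∈ B then μ a else 0) := by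
      intro a; dsimp [g]; by_cases h : a ∈ B <;> simp [h]
    simp_rw [this, Finset.sum_sub_distrib, hsum, Finset.sum_ite_mem, Finset.univ_inter]
  have h3 : ∑ a, μ a * (f a * g a) = ∑ x ∈ A, μ x - ∑ x ∈ A ∩ B, μ x := by
    have : ∀ a, μ a * (f a * g a)
        = (if a ∈ A then μ a else 0) - (if a ∈ A ∩ B then μ a else 0) := by
      intro a; dsimp [f, g]
      by_cases hA' : a ∈ A <;> by_cases hB' : a ∈ B <;> simp [hA', hB', Finset.mem_inter]
    simp_rw [this, Finset.sum_sub_distrib, Finset.sum_ite_mem, Finset.univ_inter]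
  rw [h1, h2, h3, hsum, one_mul] at key
  nlinarith [key]
end
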